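/- arXiv:1503.03418 — 6 statements merged into one kernel-verified Lean document; each statement's English description precedes it below -/
import Mathlib

section
/- For every nonnegative integer n, the Legendre polynomial satisfies P_n(√(1+4x))² = ∑_{k=0}^{n} C(n,k)·C(n+k,k)·C(2k,k)·x^k, as an identity of polynomials in x. -/
/-- Generalized binomial coefficient C(a,k) = a(a-1)...(a-k+1)/k!. -/
def gchoose (a : ℚ) (k : ℕ) : ℚ :=
  (∏ i ∈ Finset.range k, (a - i)) / (Nat.factorial k : ℚ)

/-- `x` is a `p`-adic integer: its reduced denominator is not divisible by `p`. -/
def IsPInt (p : ℕ) (x : ℚ) : Prop := ¬ p ∣ x.den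

/-- `x ≡ y (mod p^e)` for rationals: `(x - y)/p^e` is a `p`-adic integer. -/
def ModCong (p e : ℕ) (x y : ℚ) : Prop :=
  ∃ z : ℚ, ¬ p ∣ z.den ∧ x - y = (p : ℚ) ^ e * z

/-- The Legendre polynomial `P_n(x) = ∑_{k=0}^n C(n,k) C(n+k,k) ((x-1)/2)^k`. -/
noncomputable def legendre (n : ℕ) : Polynomial ℚ :=
  ∑ k ∈ Finset.range (n + 1),
    Polynomial.C ((n.choose k : ℚ) * ((n + k).choose k)) *
      (Polynomial.C (1/2 : ℚ) * (Polynomial.X - 1)) ^ k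


set_option maxHeartbeats 1000000

noncomputable def cc (m k : ℕ) : ℝ := (m.choose k : ℝ) * ((m+k).choose k : ℝ)
noncomputable def dd (m k : ℕ) : ℝ := (m.choose k : ℝ) * ((m+k+1).choose k : ℝ)
noncomputable def cb (k : ℕ) : ℝ := ((2*k).choose k : ℝ)
noncomputable def LL (u : ℝ) (n : ℕ) : ℝ := ∑ k ∈ Finset.range (n+1), cc n k * u^k
noncomputable def SS (x : ℝ) (n : ℕ) : ℝ := ∑ k ∈ Finset.range (n+1), cc n k * cb k * x^k
noncomputable def DD (x : ℝ) (n : ℕ) : ℝ := ∑ k ∈ Finset.range (n+1), dd n k * cb k * x^k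

lemma fne (m : ℕ) : (m.factorial : ℝ) ≠ 0 := by exact_mod_cast Nat.factorial_ne_zero m

lemma habs (m j : ℕ) : (((m+1).choose (j+1) : ℕ) : ℝ) = (m+1) * (m.choose j) / (j+1) := by
  rw [eq_div_iff (by positivity)]
  exact_mod_cast (Nat.add_one_mul_choose_eq m j).symm

lemma hT (m j : ℕ) (hj : j ≤ m+1) :
    ((m:ℝ)+1-j) * ((m+1).choose j : ℝ) = ((m:ℝ)+1) * (m.choose j : ℝ) := by
  have h := Nat.choose_mul_succ_eq m j
  have h2 : ((m.choose j * (m+1) : ℕ) : ℝ) = (((m+1).choose j * (m+1-j) : ℕ) : ℝ) := by rw [h]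
  push_cast [Nat.cast_sub hj] at h2
  linarith [h2]

lemma hR (m j : ℕ) (hj : j ≤ m) : ((m.choose (j+1) : ℕ) : ℝ) = (m.choose j : ℝ) * ((m:ℝ)-j) / (j+1) := by
  rw [eq_div_iff (by positivity)]
  have h := Nat.choose_succ_right_eq m j
  have h2 : ((m.choose (j+1) * (j+1) : ℕ) : ℝ) = ((m.choose j * (m-j) : ℕ) : ℝ) := by rw [h]
  push_cast [Nat.cast_sub hj] at h2
  linarith [h2]

lemma hcb (k : ℕ) : (((2*(k+1)).choose (k+1) : ℕ) : ℝ) = 2*(2*(k:ℝ)+1) * ((2*k).choose k : ℝ) / (k+1) := by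
  rw [eq_div_iff (by positivity)]
  have h := Nat.succ_mul_centralBinom_succ k
  have h2 : (((k+1) * (k+1).centralBinom : ℕ) : ℝ) = ((2 * (2*k+1) * k.centralBinom : ℕ) : ℝ) := by rw [h]
  unfold Nat.centralBinom at h2
  push_cast at h2
  linarith [h2]

lemma pk0 (n k : ℕ) :
    (n+2:ℝ) * cc (n+2) (k+1) - (2*n+3) * cc (n+1) (k+1) + (n+1) * cc n (k+1)
      = 2*(2*n+3) * cc (n+1) k := by
  unfold cc
  rcases (show k+1 ≤ n ∨ k = n ∨ k = n+1 ∨ n+2 ≤ k by omega) with h | h | h | h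
  · obtain ⟨b, rfl⟩ : ∃ b, n = k + 1 + b := ⟨n - (k+1), by omega⟩
    rw [Nat.cast_choose ℝ (show k+1 ≤ k+1+b+2 by omega),
        Nat.cast_choose ℝ (show k+1 ≤ k+1+b+2+(k+1) by omega),
        Nat.cast_choose ℝ (show k+1 ≤ k+1+b+1 by omega),
        Nat.cast_choose ℝ (show k+1 ≤ k+1+b+1+(k+1) by omega),
        Nat.cast_choose ℝ (show k+1 ≤ k+1+b by omega),
        Nat.cast_choose ℝ (show k+1 ≤ k+1+b+(k+1) by omega),
        Nat.cast_choose ℝ (show k ≤ k+1+b+1 by omega),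
        Nat.cast_choose ℝ (show k ≤ k+1+b+1+k by omega),
        show k+1+b+2-(k+1) = b+1+1 by omega,
        show k+1+b+2+(k+1)-(k+1) = k+b+1+1+1 by omega,
        show k+1+b+1-(k+1) = b+1 by omega,
        show k+1+b+1+(k+1)-(k+1) = k+b+1+1 by omega,
        show k+1+b-(k+1) = b by omega,
        show k+1+b+(k+1)-(k+1) = k+b+1 by omega,
        show k+1+b+1-k = b+1+1 by omega,
        show k+1+b+1+k-k = k+b+1+1 by omega,
        show k+1+b+2+(k+1) = k+b+k+1+1+1+1 by omega,
        show k+1+b+1+(k+1) = k+b+k+1+1+1 by omega,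
        show k+1+b+(k+1) = k+b+k+1+1 by omega,
        show k+1+b+1+k = k+b+k+1+1 by omega,
        show k+1+b+2 = k+b+1+1+1 by omega,
        show k+1+b+1 = k+b+1+1 by omega,
        show k+1+b = k+b+1 by omega]
    simp only [Nat.factorial_succ]
    push_cast
    have h1 := fne k; have h2 := fne b; have h3 := fne (k+b); have h4 := fne (k+b+k)
    field_simp
    ring
  · subst h
    rw [Nat.choose_eq_zero_of_lt (show k < k+1 by omega)]
    rw [Nat.cast_choose ℝ (show k+1 ≤ k+2 by omega),
        Nat.cast_choose ℝ (show k+1 ≤ k+2+(k+1) by omega),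
        Nat.cast_choose ℝ (show k+1 ≤ k+1 by omega),
        Nat.cast_choose ℝ (show k+1 ≤ k+1+(k+1) by omega),
        Nat.cast_choose ℝ (show k ≤ k+1 by omega),
        Nat.cast_choose ℝ (show k ≤ k+1+k by omega),
        show k+2-(k+1) = 1 by omega,
        show k+2+(k+1)-(k+1) = k+1+1 by omega,
        show k+1-(k+1) = 0 by omega,
        show k+1+(k+1)-(k+1) = k+1 by omega,
        show k+1-k = 1 by omega,
        show k+1+k-k = k+1 by omega,
        show k+2+(k+1) = k+k+1+1+1 by omega,
        show k+1+(k+1) = k+k+1+1 by omega,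
        show k+1+k = k+k+1 by omega,
        show k+2 = k+1+1 by omega]
    simp only [Nat.factorial_succ, Nat.factorial_zero, Nat.factorial_one]
    push_cast
    have h1 := fne k; have h2 := fne (k+k)
    field_simp
    ring
  · subst h
    rw [Nat.choose_eq_zero_of_lt (show n+1 < n+1+1 by omega),
        Nat.choose_eq_zero_of_lt (show n < n+1+1 by omega)]
    rw [Nat.cast_choose ℝ (show n+1+1 ≤ n+2 by omega),
        Nat.cast_choose ℝ (show n+1+1 ≤ n+2+(n+1+1) by omega),
        Nat.cast_choose ℝ (show n+1 ≤ n+1 by omega),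
        Nat.cast_choose ℝ (show n+1 ≤ n+1+(n+1) by omega),
        show n+2-(n+1+1) = 0 by omega,
        show n+2+(n+1+1)-(n+1+1) = n+1+1 by omega,
        show n+1-(n+1) = 0 by omega,
        show n+1+(n+1)-(n+1) = n+1 by omega,
        show n+2+(n+1+1) = n+n+1+1+1+1 by omega,
        show n+1+(n+1) = n+n+1+1 by omega,
        show n+2 = n+1+1 by omega]
    simp only [Nat.factorial_succ, Nat.factorial_zero]
    push_cast
    have h1 := fne n; have h2 := fne (n+n)
    field_simp
    ring
  · rw [Nat.choose_eq_zero_of_lt (show n+2 < k+1 by omega),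
        Nat.choose_eq_zero_of_lt (show n+1 < k+1 by omega),
        Nat.choose_eq_zero_of_lt (show n < k+1 by omega),
        Nat.choose_eq_zero_of_lt (show n+1 < k by omega)]
    push_cast
    ring

lemma pk1 (n k : ℕ) :
    (n+2:ℝ) * dd (n+1) k = (2*n+3) * cc (n+1) k - (n+1) * dd n k := by
  unfold dd cc
  rcases (show k ≤ n ∨ k = n+1 ∨ n+2 ≤ k by omega) with h | h | h
  · obtain ⟨b, rfl⟩ : ∃ b, n = k + b := ⟨n - k, by omega⟩
    rw [Nat.cast_choose ℝ (show k ≤ k+b+1 by omega),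
        Nat.cast_choose ℝ (show k ≤ k+b+1+k+1 by omega),
        Nat.cast_choose ℝ (show k ≤ k+b+1+k by omega),
        Nat.cast_choose ℝ (show k ≤ k+b by omega),
        Nat.cast_choose ℝ (show k ≤ k+b+k+1 by omega),
        show k+b+1-k = b+1 by omega, show k+b+1+k+1-k = k+b+1+1 by omega,
        show k+b+1+k-k = k+b+1 by omega, show k+b-k = b by omega,
        show k+b+k+1-k = k+b+1 by omega,
        show k+b+1+k = k+b+k+1 by omega]
    simp only [Nat.factorial_succ]
    push_cast
    have h1 := fne k; have h2 := fne b; have h3 := fne (k+b); have h4 := fne (k+b+k)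
    field_simp
    ring
  · subst h
    rw [Nat.choose_eq_zero_of_lt (show n < n+1 by omega)]
    rw [Nat.cast_choose ℝ (show n+1 ≤ n+1 by omega),
        Nat.cast_choose ℝ (show n+1 ≤ n+1+(n+1)+1 by omega),
        Nat.cast_choose ℝ (show n+1 ≤ n+1+(n+1) by omega),
        show n+1-(n+1) = 0 by omega, show n+1+(n+1)+1-(n+1) = n+1+1 by omega,
        show n+1+(n+1)-(n+1) = n+1 by omega,
        show n+1+(n+1) = n+n+1+1 by omega]
    simp only [Nat.factorial_succ, Nat.factorial_zero]
    push_cast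
    have h1 := fne n; have h2 := fne (n+n)
    field_simp
    ring
  · rw [Nat.choose_eq_zero_of_lt (show n+1 < k by omega),
        Nat.choose_eq_zero_of_lt (show n < k by omega)]
    push_cast
    ring

lemma pk2 (n k : ℕ) :
    (n+2:ℝ)^2 * cc (n+2) (k+1) * cb (k+1) - (2*n+3)^2 * cc (n+1) (k+1) * cb (k+1)
      + 2*(n+1)*(2*n+3) * dd n (k+1) * cb (k+1) - (n+1)^2 * cc n (k+1) * cb (k+1)
      = 4*(2*n+3) * ((2*n+3) * cc (n+1) k - 2*(n+1) * dd n k) * cb k := by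
  unfold cc dd cb
  rcases (show k+1 ≤ n ∨ k = n ∨ k = n+1 ∨ n+2 ≤ k by omega) with h | h | h | h
  · rw [show n+2+(k+1) = n+k+2+1 by omega,
        show n+1+(k+1) = n+k+1+1 by omega,
        show n+(k+1)+1 = n+k+1+1 by omega,
        show n+(k+1) = n+k+1 by omega,
        show n+1+k = n+k+1 by omega,
        show (n+2 : ℕ) = n+1+1 by omega]
    rw [habs (n+1) k, habs (n+k+2) k, habs n k, habs (n+k+1) k, habs (n+k) k,
        hR n k (by omega), hcb k]
    have hB : (((n+k+2).choose k : ℕ) : ℝ) = ((n:ℝ)+k+2) * ((n+k+1).choose k : ℝ) / ((n:ℝ)+2) := by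
      rw [eq_div_iff (by positivity)]
      have h2 := hT (n+k+1) k (by omega)
      rw [show n+k+1+1 = n+k+2 by omega] at h2
      push_cast at h2
      linear_combination h2
    have hp : ((n.choose k : ℕ) : ℝ) = ((n:ℝ)+1-k) * ((n+1).choose k : ℝ) / ((n:ℝ)+1) := by
      rw [eq_div_iff (by positivity)]
      have h2 := hT n k (by omega)
      push_cast at h2
      linear_combination -h2
    have hq : (((n+k).choose k : ℕ) : ℝ) = ((n:ℝ)+1) * ((n+k+1).choose k : ℝ) / ((n:ℝ)+k+1) := by
      rw [eq_div_iff (by positivity)]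
      have h2 := hT (n+k) k (by omega)
      push_cast at h2
      linear_combination -h2
    rw [hB, hp, hq]
    have z1 : ((k:ℝ)+1) ≠ 0 := by positivity
    have z2 : ((n:ℝ)+1) ≠ 0 := by positivity
    have z3 : ((n:ℝ)+2) ≠ 0 := by positivity
    have z4 : ((n:ℝ)+k+1) ≠ 0 := by positivity
    field_simp
    push_cast
    ring
  · subst h
    rw [Nat.choose_eq_zero_of_lt (show k < k+1 by omega)]
    rw [show 2*(k+1) = k+k+1+1 by omega, show 2*k = k+k by omega,
        Nat.cast_choose ℝ (show k+1 ≤ k+2 by omega),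
        Nat.cast_choose ℝ (show k+1 ≤ k+2+(k+1) by omega),
        Nat.cast_choose ℝ (show k+1 ≤ k+1 by omega),
        Nat.cast_choose ℝ (show k+1 ≤ k+1+(k+1) by omega),
        Nat.cast_choose ℝ (show k+1 ≤ k+k+1+1 by omega),
        Nat.cast_choose ℝ (show k ≤ k+1 by omega),
        Nat.cast_choose ℝ (show k ≤ k+1+k by omega),
        Nat.cast_choose ℝ (show k ≤ k+k by omega),
        Nat.cast_choose ℝ (show k ≤ k+k+1 by omega),
        show k+2-(k+1) = 1 by omega,
        show k+2+(k+1)-(k+1) = k+1+1 by omega,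
        show k+1-(k+1) = 0 by omega,
        show k+1+(k+1)-(k+1) = k+1 by omega,
        show k+k+1+1-(k+1) = k+1 by omega,
        show k+1-k = 1 by omega,
        show k+1+k-k = k+1 by omega,
        show k+k-k = k by omega,
        show k+k+1-k = k+1 by omega,
        show k+2+(k+1) = k+k+1+1+1 by omega,
        show k+1+(k+1) = k+k+1+1 by omega,
        show k+1+k = k+k+1 by omega,
        show k+2 = k+1+1 by omega]
    simp only [Nat.factorial_succ, Nat.factorial_zero, Nat.factorial_one, Nat.choose_self]
    push_cast
    have h1 := fne k; have h2 := fne (k+k)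
    field_simp
    ring
  · subst h
    rw [Nat.choose_eq_zero_of_lt (show n+1 < n+1+1 by omega),
        Nat.choose_eq_zero_of_lt (show n < n+1+1 by omega),
        Nat.choose_eq_zero_of_lt (show n < n+1 by omega)]
    rw [show 2*(n+1+1) = n+n+1+1+1+1 by omega, show 2*(n+1) = n+n+1+1 by omega,
        Nat.cast_choose ℝ (show n+1+1 ≤ n+2 by omega),
        Nat.cast_choose ℝ (show n+1+1 ≤ n+2+(n+1+1) by omega),
        Nat.cast_choose ℝ (show n+1+1 ≤ n+n+1+1+1+1 by omega),
        Nat.cast_choose ℝ (show n+1 ≤ n+1 by omega),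
        Nat.cast_choose ℝ (show n+1 ≤ n+1+(n+1) by omega),
        Nat.cast_choose ℝ (show n+1 ≤ n+n+1+1 by omega),
        show n+2-(n+1+1) = 0 by omega,
        show n+2+(n+1+1)-(n+1+1) = n+1+1 by omega,
        show n+n+1+1+1+1-(n+1+1) = n+1+1 by omega,
        show n+1-(n+1) = 0 by omega,
        show n+1+(n+1)-(n+1) = n+1 by omega,
        show n+n+1+1-(n+1) = n+1 by omega,
        show n+2+(n+1+1) = n+n+1+1+1+1 by omega,
        show n+1+(n+1) = n+n+1+1 by omega,
        show n+2 = n+1+1 by omega]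
    simp only [Nat.factorial_succ, Nat.factorial_zero]
    push_cast
    have h1 := fne n; have h2 := fne (n+n)
    field_simp
    ring
  · rw [Nat.choose_eq_zero_of_lt (show n+2 < k+1 by omega),
        Nat.choose_eq_zero_of_lt (show n+1 < k+1 by omega),
        Nat.choose_eq_zero_of_lt (show n < k+1 by omega),
        Nat.choose_eq_zero_of_lt (show n+1 < k by omega),
        Nat.choose_eq_zero_of_lt (show n < k by omega)]
    push_cast
    ring

lemma pad (f : ℕ → ℝ) (n M : ℕ) (h : n ≤ M) (hf : ∀ k, n < k → f k = 0) :
    ∑ k ∈ Finset.range (n+1), f k = ∑ k ∈ Finset.range (M+1), f k := by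
  apply Finset.sum_subset (Finset.range_subset_range.mpr (by omega))
  intro k hk hnk
  simp only [Finset.mem_range, not_lt] at hk hnk
  exact hf k (by omega)

lemma ddpad (x : ℝ) (n k : ℕ) (hk : n < k) : dd n k * cb k * x^k = 0 := by
  unfold dd
  rw [Nat.choose_eq_zero_of_lt hk]
  simp

lemma ccpad (x : ℝ) (n k : ℕ) (hk : n < k) : cc n k * cb k * x^k = 0 := by
  unfold cc
  rw [Nat.choose_eq_zero_of_lt hk]
  simp

lemma ccpad' (u : ℝ) (n k : ℕ) (hk : n < k) : cc n k * u^k = 0 := by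
  unfold cc
  rw [Nat.choose_eq_zero_of_lt hk]
  simp

lemma sumrec (u : ℝ) (n : ℕ) :
    (n+2:ℝ) * LL u (n+2) = (2*n+3) * (2*u+1) * LL u (n+1) - (n+1) * LL u n := by
  have lhs_eq : (n+2:ℝ) * LL u (n+2) - (2*n+3) * LL u (n+1) + (n+1) * LL u n
      = ∑ k ∈ Finset.range (n+3),
          (((n:ℝ)+2) * cc (n+2) k - (2*n+3) * cc (n+1) k + ((n:ℝ)+1) * cc n k) * u^k := by
    unfold LL
    rw [pad (fun k => cc (n+1) k * u^k) (n+1) (n+2) (by omega) (fun k hk => ccpad' u (n+1) k hk),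
        pad (fun k => cc n k * u^k) n (n+2) (by omega) (fun k hk => ccpad' u n k hk)]
    simp only [Finset.mul_sum, ← Finset.sum_sub_distrib, ← Finset.sum_add_distrib]
    exact Finset.sum_congr rfl fun k _ => by ring
  have rhs_eq : (2*(n:ℝ)+3) * (2*u) * LL u (n+1)
      = ∑ k ∈ Finset.range (n+2), (2*(2*(n:ℝ)+3) * cc (n+1) k) * u^(k+1) := by
    unfold LL
    simp only [Finset.mul_sum]
    exact Finset.sum_congr rfl fun k _ => by ring
  have main : (n+2:ℝ) * LL u (n+2) - (2*n+3) * LL u (n+1) + (n+1) * LL u n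
      = (2*(n:ℝ)+3) * (2*u) * LL u (n+1) := by
    rw [lhs_eq, rhs_eq,
        Finset.sum_range_succ' (fun k => (((n:ℝ)+2) * cc (n+2) k - (2*n+3) * cc (n+1) k + ((n:ℝ)+1) * cc n k) * u^k) (n+2)]
    have h0 : (((n:ℝ)+2) * cc (n+2) 0 - (2*n+3) * cc (n+1) 0 + ((n:ℝ)+1) * cc n 0) * u^0 = 0 := by
      unfold cc
      simp
      ring
    rw [h0, add_zero]
    refine Finset.sum_congr rfl fun k _ => ?_
    have hk0 := pk0 n k
    linear_combination u^(k+1) * hk0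
  linear_combination main

lemma sumI1 (x : ℝ) (n : ℕ) :
    (n+2:ℝ) * DD x (n+1) = (2*n+3) * SS x (n+1) - (n+1) * DD x n := by
  unfold DD SS
  rw [pad (fun k => dd n k * cb k * x^k) n (n+1) (by omega) (fun k hk => ddpad x n k hk)]
  simp only [Finset.mul_sum, ← Finset.sum_sub_distrib]
  refine Finset.sum_congr rfl fun k _ => ?_
  have hk1 := pk1 n k
  linear_combination (cb k * x^k) * hk1

lemma sumI2 (x : ℝ) (n : ℕ) :
    (n+2:ℝ)^2 * SS x (n+2)
      = (2*n+3)*(1+4*x) * ((n+2) * DD x (n+1) - (n+1) * DD x n) + (n+1)^2 * SS x n := by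
  have lhs_eq : (n+2:ℝ)^2 * SS x (n+2) - (2*n+3) * ((n+2) * DD x (n+1) - (n+1) * DD x n)
        - (n+1)^2 * SS x n
      = ∑ k ∈ Finset.range (n+3),
          (((n:ℝ)+2)^2 * cc (n+2) k * cb k
            - (2*(n:ℝ)+3) * (((n:ℝ)+2) * dd (n+1) k - ((n:ℝ)+1) * dd n k) * cb k
            - ((n:ℝ)+1)^2 * cc n k * cb k) * x^k := by
    unfold SS DD
    rw [pad (fun k => dd (n+1) k * cb k * x^k) (n+1) (n+2) (by omega) (fun k hk => ddpad x (n+1) k hk),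
        pad (fun k => dd n k * cb k * x^k) n (n+2) (by omega) (fun k hk => ddpad x n k hk),
        pad (fun k => cc n k * cb k * x^k) n (n+2) (by omega) (fun k hk => ccpad x n k hk)]
    simp only [Finset.mul_sum, ← Finset.sum_sub_distrib, ← Finset.sum_add_distrib]
    exact Finset.sum_congr rfl fun k _ => by ring
  have rhs_eq : (2*(n:ℝ)+3) * (4*x) * (((n:ℝ)+2) * DD x (n+1) - ((n:ℝ)+1) * DD x n)
      = ∑ k ∈ Finset.range (n+2),
          (4*(2*(n:ℝ)+3) * (((n:ℝ)+2) * dd (n+1) k - ((n:ℝ)+1) * dd n k) * cb k) * x^(k+1) := by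
    unfold DD
    rw [pad (fun k => dd n k * cb k * x^k) n (n+1) (by omega) (fun k hk => ddpad x n k hk)]
    simp only [Finset.mul_sum, ← Finset.sum_sub_distrib]
    exact Finset.sum_congr rfl fun k _ => by ring
  have main : (n+2:ℝ)^2 * SS x (n+2) - (2*n+3) * ((n+2) * DD x (n+1) - (n+1) * DD x n)
        - (n+1)^2 * SS x n
      = (2*(n:ℝ)+3) * (4*x) * (((n:ℝ)+2) * DD x (n+1) - ((n:ℝ)+1) * DD x n) := by
    rw [lhs_eq, rhs_eq,
        Finset.sum_range_succ' (fun k =>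
          (((n:ℝ)+2)^2 * cc (n+2) k * cb k
            - (2*(n:ℝ)+3) * (((n:ℝ)+2) * dd (n+1) k - ((n:ℝ)+1) * dd n k) * cb k
            - ((n:ℝ)+1)^2 * cc n k * cb k) * x^k) (n+2)]
    have h0 : (((n:ℝ)+2)^2 * cc (n+2) 0 * cb 0
            - (2*(n:ℝ)+3) * (((n:ℝ)+2) * dd (n+1) 0 - ((n:ℝ)+1) * dd n 0) * cb 0
            - ((n:ℝ)+1)^2 * cc n 0 * cb 0) * x^0 = 0 := by
      unfold cc dd cb
      simp
      ring
    rw [h0, add_zero]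
    refine Finset.sum_congr rfl fun k _ => ?_
    have h2 := pk2 n k
    have ha := pk1 n (k+1)
    have hb := pk1 n k
    linear_combination x^(k+1) * h2 - ((2*(n:ℝ)+3) * cb (k+1) * x^(k+1)) * ha
      - (4*(2*(n:ℝ)+3) * cb k * x^(k+1)) * hb
  linear_combination main

lemma aeval_legendre (y : ℝ) (n : ℕ) :
    Polynomial.aeval y (legendre n) = ∑ k ∈ Finset.range (n+1), cc n k * ((y-1)/2)^k := by
  unfold legendre cc
  rw [map_sum]
  refine Finset.sum_congr rfl fun k _ => ?_
  simp only [map_mul, map_pow, map_sub, map_one, Polynomial.aeval_C, Polynomial.aeval_X,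
    eq_ratCast]
  push_cast
  ring


theorem legendre_sq_eval (n : ℕ) (x : ℝ) (hx : 0 ≤ 1 + 4 * x) :
    (Polynomial.aeval (Real.sqrt (1 + 4 * x)) (legendre n)) ^ 2 =
      ∑ k ∈ Finset.range (n + 1),
        (n.choose k : ℝ) * ((n + k).choose k) * ((2 * k).choose k) * x ^ k := by
  set y := Real.sqrt (1 + 4 * x) with hy
  have hy2 : y^2 = 1+4*x := Real.sq_sqrt hx
  set u : ℝ := (y-1)/2 with hu
  have huy : 2*u+1 = y := by rw [hu]; ring
  have key : ∀ m : ℕ, LL u m ^ 2 = SS x m ∧ LL u m * LL u (m+1) = y * DD x m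
      ∧ LL u (m+1)^2 = SS x (m+1) := by
    intro m
    induction m with
    | zero =>
      have l0 : LL u 0 = 1 := by unfold LL cc; simp
      have l1 : LL u 1 = 2*u+1 := by
        unfold LL cc
        rw [Finset.sum_range_succ, Finset.sum_range_succ, Finset.sum_range_zero]
        norm_num
        try ring
      have s0 : SS x 0 = 1 := by unfold SS cc cb; simp
      have s1 : SS x 1 = 1 + 4*x := by
        unfold SS cc cb
        rw [Finset.sum_range_succ, Finset.sum_range_succ, Finset.sum_range_zero]
        norm_num
        try ring
      have d0 : DD x 0 = 1 := by unfold DD dd cb; simp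
      refine ⟨?_, ?_, ?_⟩
      · rw [l0, s0]; ring
      · rw [l0, l1, d0, huy]; ring
      · rw [l1, s1, huy]; exact hy2
    | succ m ih =>
      obtain ⟨h1, h2, h3⟩ := ih
      have hm2 : ((m:ℝ)+2) ≠ 0 := by positivity
      have r := sumrec u m
      have i1 := sumI1 x m
      have i2 := sumI2 x m
      have A : LL u (m+1) * LL u (m+2) = y * DD x (m+1) := by
        have e : ((m:ℝ)+2) * (LL u (m+1) * LL u (m+2)) = ((m:ℝ)+2) * (y * DD x (m+1)) := by
          linear_combination (LL u (m+1)) * r + ((2*(m:ℝ)+3) * LL u (m+1)^2) * huy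
            + ((2*(m:ℝ)+3)*y) * h3 - ((m:ℝ)+1) * h2 - y * i1
        exact mul_left_cancel₀ hm2 e
      have B : LL u (m+2)^2 = SS x (m+2) := by
        have e : ((m:ℝ)+2)^2 * (LL u (m+2)^2) = ((m:ℝ)+2)^2 * SS x (m+2) := by
          linear_combination (((m:ℝ)+2) * LL u (m+2)) * r - ((m:ℝ)+1) * (LL u m) * r
            + (((m:ℝ)+2)*(2*(m:ℝ)+3)*(2*u+1)) * A
            + ((2*(m:ℝ)+3)*(((m:ℝ)+2)*(y*DD x (m+1)) - ((m:ℝ)+1)*(LL u m * LL u (m+1)))) * huy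
            - ((m:ℝ)+1)*(2*(m:ℝ)+3)*y * h2
            + ((m:ℝ)+1)^2 * h1
            + (2*(m:ℝ)+3)*(((m:ℝ)+2)*DD x (m+1) - ((m:ℝ)+1)*DD x m) * hy2
            - i2
        exact mul_left_cancel₀ (by positivity) e
      exact ⟨h3, A, B⟩
  obtain ⟨h1, -, -⟩ := key n
  rw [aeval_legendre, ← hu]
  rw [show (∑ k ∈ Finset.range (n+1), cc n k * u^k) = LL u n from rfl, h1]
  unfold SS cc cb
  exact Finset.sum_congr rfl fun k _ => by ring
end

section
/- Both sides of the identity in Lemma 2.2 satisfy the recurrence n³·S(n) = (2n−1)(n²−n−2a(a+1))·S(n−1) + (n−1)(2a+n)(2a+2−n)·S(n−2) for n ≥ 2, with S(0)=1 and S(1)=−2a(a+1). -/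
noncomputable def S1f (a : ℚ) (n : ℕ) : ℚ :=
  ∑ k ∈ Finset.range (n + 1),
    gchoose a k * gchoose (-1 - a) k * gchoose a (n - k) * gchoose (-1 - a) (n - k)

noncomputable def S2f (a : ℚ) (n : ℕ) : ℚ :=
  ∑ k ∈ Finset.range (n + 1),
    ((2 * k).choose k : ℚ) * gchoose a k * gchoose (-1 - a) k *
      (k.choose (n - k)) * (-1) ^ (n - k)

/-! ### Auxiliary lemmas -/

lemma gchoose_zero (x : ℚ) : gchoose x 0 = 1 := by simp [gchoose]

lemma gchoose_one (x : ℚ) : gchoose x 1 = x := by simp [gchoose]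

lemma gchoose_succ (x : ℚ) (k : ℕ) :
    ((k : ℚ) + 1) * gchoose x (k + 1) = (x - k) * gchoose x k := by
  unfold gchoose
  rw [Finset.prod_range_succ, Nat.factorial_succ]
  have h1 : (Nat.factorial k : ℚ) ≠ 0 := by exact_mod_cast k.factorial_ne_zero
  push_cast; field_simp

/-- The sequence `c_j = C(a,j) C(-1-a,j) (-1)^j`, extended by zero to negative indices. -/
noncomputable def czf (a : ℚ) (j : ℤ) : ℚ :=
  if 0 ≤ j then gchoose a j.toNat * gchoose (-1 - a) j.toNat * (-1) ^ j.toNat else 0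

lemma czf_neg (a : ℚ) (j : ℤ) (h : j < 0) : czf a j = 0 := if_neg (by omega)

lemma czf_natCast (a : ℚ) (s : ℕ) :
    czf a (s : ℤ) = gchoose a s * gchoose (-1 - a) s * (-1) ^ s := by
  simp only [czf, Int.toNat_natCast, if_pos (Int.natCast_nonneg s)]

lemma czf_zero (a : ℚ) : czf a 0 = 1 := by simp [czf, gchoose_zero]

lemma czf_rec (a : ℚ) (j : ℤ) :
    ((j : ℚ) + 1) ^ 2 * czf a (j + 1) = (a ^ 2 + a - (j : ℚ) * ((j : ℚ) + 1)) * czf a j := by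
  rcases lt_or_ge j 0 with hj | hj
  · rw [czf_neg a j hj]
    rcases lt_or_ge (j + 1) 0 with hj1 | hj1
    · rw [czf_neg a _ hj1]; ring
    · have : j = -1 := by omega
      subst this; norm_num
  · lift j to ℕ using hj with k
    have e1 : ((k : ℤ) + 1) = ((k + 1 : ℕ) : ℤ) := by push_cast; ring
    rw [e1, czf_natCast, czf_natCast]
    have h12 : (((k : ℚ) + 1) * gchoose a (k + 1)) * (((k : ℚ) + 1) * gchoose (-1 - a) (k + 1)) =
        ((a - k) * gchoose a k) * ((-1 - a - k) * gchoose (-1 - a) k) := by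
      rw [gchoose_succ a k, gchoose_succ (-1 - a) k]
    push_cast
    linear_combination ((-1 : ℚ)) ^ (k + 1) * h12

/-- Binomial coefficient `C(k,m)` with integer lower index, zero for negative `m`. -/
def Bzf (k : ℕ) (m : ℤ) : ℚ := if 0 ≤ m then (k.choose m.toNat : ℚ) else 0

lemma Bzf_neg (k : ℕ) (m : ℤ) (h : m < 0) : Bzf k m = 0 := if_neg (by omega)

lemma Bzf_natCast (k s : ℕ) : Bzf k (s : ℤ) = (k.choose s : ℚ) := by
  simp only [Bzf, Int.toNat_natCast, if_pos (Int.natCast_nonneg s)]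

lemma Bzf_pascal (k : ℕ) (m : ℤ) : Bzf (k + 1) m = Bzf k m + Bzf k (m - 1) := by
  rcases lt_or_ge m 0 with h | h
  · rw [Bzf_neg _ _ h, Bzf_neg _ _ h, Bzf_neg _ _ (by omega)]; ring
  · lift m to ℕ using h with s
    cases s with
    | zero => norm_num [Bzf]
    | succ s' =>
        rw [show ((s' + 1 : ℕ) : ℤ) - 1 = ((s' : ℕ) : ℤ) by push_cast; ring,
          Bzf_natCast, Bzf_natCast, Bzf_natCast]
        push_cast [Nat.choose_succ_succ]
        ring

lemma Bzf_absorb (k : ℕ) (m : ℤ) :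
    (m : ℚ) * Bzf k m = ((k : ℚ) - (m : ℚ) + 1) * Bzf k (m - 1) := by
  rcases lt_or_ge m 0 with h | h
  · rw [Bzf_neg _ _ h, Bzf_neg _ _ (by omega)]; ring
  · lift m to ℕ using h with s
    cases s with
    | zero => norm_num [Bzf]
    | succ s' =>
        rw [show ((s' + 1 : ℕ) : ℤ) - 1 = ((s' : ℕ) : ℤ) by push_cast; ring,
          Bzf_natCast, Bzf_natCast]
        rcases le_or_gt s' k with hs | hs
        · have hc := Nat.choose_succ_right_eq k s'
          have hc' : (k.choose (s' + 1) : ℚ) * ((s' : ℚ) + 1) =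
              (k.choose s' : ℚ) * ((k : ℚ) - s') := by
            have := congrArg (fun x : ℕ => (x : ℚ)) hc
            push_cast [Nat.cast_sub hs] at this
            linarith [this]
          push_cast
          linear_combination hc'
        · rw [Nat.choose_eq_zero_of_lt (by omega), Nat.choose_eq_zero_of_lt (by omega)]
          norm_num

/-- The sequence `d_k = C(2k,k) C(a,k) C(-1-a,k) (-1)^k`. -/
noncomputable def df (a : ℚ) (k : ℕ) : ℚ :=
  ((2 * k).choose k : ℚ) * gchoose a k * gchoose (-1 - a) k * (-1) ^ k

lemma df_def (a : ℚ) (k : ℕ) :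
    df a k = ((2 * k).choose k : ℚ) * gchoose a k * gchoose (-1 - a) k * (-1) ^ k := rfl

lemma centralBinom_succ_q (k : ℕ) :
    ((2 * (k + 1)).choose (k + 1) : ℚ) * ((k : ℚ) + 1) =
      2 * (2 * (k : ℚ) + 1) * ((2 * k).choose k : ℚ) := by
  have h := Nat.succ_mul_centralBinom_succ k
  unfold Nat.centralBinom at h
  have h' := congrArg (fun x : ℕ => (x : ℚ)) h
  push_cast at h'
  linarith [h']

lemma df_rec (a : ℚ) (k : ℕ) :
    ((k : ℚ) + 1) ^ 3 * df a (k + 1) =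
      2 * (2 * (k : ℚ) + 1) * (a ^ 2 + a - (k : ℚ) * ((k : ℚ) + 1)) * df a k := by
  unfold df
  have h123 : (((2 * (k + 1)).choose (k + 1) : ℚ) * ((k : ℚ) + 1)) *
      ((((k : ℚ) + 1) * gchoose a (k + 1)) * (((k : ℚ) + 1) * gchoose (-1 - a) (k + 1))) =
      (2 * (2 * (k : ℚ) + 1) * ((2 * k).choose k : ℚ)) *
      (((a - k) * gchoose a k) * ((-1 - a - k) * gchoose (-1 - a) k)) := by
    rw [gchoose_succ a k, gchoose_succ (-1 - a) k, centralBinom_succ_q k]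
  linear_combination ((-1 : ℚ)) ^ (k + 1) * h123

/-! ### The two sums, in telescoping-friendly form -/

noncomputable def W1f (a : ℚ) (n : ℕ) : ℚ :=
  ∑ k ∈ Finset.range (n + 1), czf a k * czf a ((n : ℤ) - k)

noncomputable def W2f (a : ℚ) (n : ℕ) : ℚ :=
  ∑ k ∈ Finset.range (n + 1), df a k * Bzf k ((n : ℤ) - k)

/-- Zeilberger certificate for `W1f`. -/
noncomputable def G1 (a : ℚ) (n : ℕ) (k : ℕ) : ℚ :=
  czf a k * (-(n : ℚ) ^ 3 * czf a ((n : ℤ) - k) +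
    (((n : ℚ) + 2 * k) * (a ^ 2 + a) + (n : ℚ) * k - (n : ℚ) ^ 2 * ((n : ℚ) - 1)) *
      czf a ((n : ℤ) - 1 - k))

lemma key1 (a : ℚ) (n k : ℕ) :
    (n : ℚ) ^ 3 * (czf a k * czf a ((n : ℤ) - k)) -
      (2 * (n : ℚ) - 1) * (2 * (a ^ 2 + a) - (n : ℚ) ^ 2 + (n : ℚ)) *
        (czf a k * czf a ((n : ℤ) - 1 - k)) -
      ((n : ℚ) - 1) * (4 * (a ^ 2 + a) + 2 * (n : ℚ) - (n : ℚ) ^ 2) *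
        (czf a k * czf a ((n : ℤ) - 2 - k)) =
    G1 a n (k + 1) - G1 a n k := by
  have h1 := czf_rec a (k : ℤ)
  have h2 := czf_rec a ((n : ℤ) - 2 - k)
  rw [show (n : ℤ) - 2 - k + 1 = (n : ℤ) - 1 - k by ring] at h2
  unfold G1
  push_cast at h1 h2 ⊢
  rw [show (n : ℤ) - ((k : ℤ) + 1) = (n : ℤ) - 1 - k by ring,
    show (n : ℤ) - 1 - ((k : ℤ) + 1) = (n : ℤ) - 2 - k by ring]
  linear_combination
    ((3 * (n : ℚ) - 2 * k - 2) * czf a ((n : ℤ) - 1 - k) +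
      (3 * (n : ℚ) - 2 * k - 4) * czf a ((n : ℤ) - 2 - k)) * h1 +
    (((n : ℚ) + 2 * k) * czf a (k : ℤ) + ((n : ℚ) + 2 * k + 2) * czf a ((k : ℤ) + 1)) * h2

/-- Zeilberger certificate for `W2f`. -/
noncomputable def G2 (a : ℚ) (n k : ℕ) : ℚ :=
  (n : ℚ) * (k : ℚ) ^ 2 * df a k * Bzf k ((n : ℤ) - k)

lemma key2 (a : ℚ) (n k : ℕ) :
    (n : ℚ) ^ 3 * (df a k * Bzf k ((n : ℤ) - k)) -
      (2 * (n : ℚ) - 1) * (2 * (a ^ 2 + a) - (n : ℚ) ^ 2 + (n : ℚ)) *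
        (df a k * Bzf k ((n : ℤ) - 1 - k)) -
      ((n : ℚ) - 1) * (4 * (a ^ 2 + a) + 2 * (n : ℚ) - (n : ℚ) ^ 2) *
        (df a k * Bzf k ((n : ℤ) - 2 - k)) =
    G2 a n k - G2 a n (k + 1) := by
  have hd := df_rec a k
  have hp := Bzf_pascal k ((n : ℤ) - 1 - k)
  rw [show (n : ℤ) - 1 - k - 1 = (n : ℤ) - 2 - k by ring] at hp
  have hx := Bzf_absorb k ((n : ℤ) - k)
  rw [show (n : ℤ) - k - 1 = (n : ℤ) - 1 - k by ring] at hx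
  have hy := Bzf_absorb k ((n : ℤ) - 1 - k)
  rw [show (n : ℤ) - 1 - k - 1 = (n : ℤ) - 2 - k by ring] at hy
  unfold G2
  push_cast at hx hy ⊢
  rw [show (n : ℤ) - ((k : ℤ) + 1) = (n : ℤ) - 1 - k by ring]
  linear_combination
    (Bzf k ((n : ℤ) - 1 - k) + 2 * Bzf k ((n : ℤ) - 2 - k)) * hd +
    ((n : ℚ) * ((k : ℚ) + 1) ^ 2 * df a (k + 1)) * hp +
    ((n : ℚ) * ((n : ℚ) + k) * df a k) * hx +
    ((4 * (k : ℚ) ^ 2 + 2 * k - 4 * (a ^ 2 + a) - (n : ℚ) + 2 * n * k + (n : ℚ) ^ 2) * df a k +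
      ((k : ℚ) + 1) ^ 2 * df a (k + 1)) * hy

lemma W1f_rec (a : ℚ) (m : ℕ) :
    ((m : ℚ) + 2) ^ 3 * W1f a (m + 2) =
      (2 * ((m : ℚ) + 2) - 1) * (2 * (a ^ 2 + a) - ((m : ℚ) + 2) ^ 2 + ((m : ℚ) + 2)) *
        W1f a (m + 1) +
      (((m : ℚ) + 2) - 1) * (4 * (a ^ 2 + a) + 2 * ((m : ℚ) + 2) - ((m : ℚ) + 2) ^ 2) *
        W1f a m := by
  have tele := Finset.sum_range_sub (G1 a (m + 2)) (m + 3)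
  have main : ∑ k ∈ Finset.range (m + 3),
      (((m + 2 : ℕ) : ℚ) ^ 3 * (czf a k * czf a (((m + 2 : ℕ) : ℤ) - k)) -
        (2 * ((m + 2 : ℕ) : ℚ) - 1) * (2 * (a ^ 2 + a) - ((m + 2 : ℕ) : ℚ) ^ 2 + ((m + 2 : ℕ) : ℚ)) *
          (czf a k * czf a (((m + 2 : ℕ) : ℤ) - 1 - k)) -
        (((m + 2 : ℕ) : ℚ) - 1) * (4 * (a ^ 2 + a) + 2 * ((m + 2 : ℕ) : ℚ) - ((m + 2 : ℕ) : ℚ) ^ 2) *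
          (czf a k * czf a (((m + 2 : ℕ) : ℤ) - 2 - k))) =
      G1 a (m + 2) (m + 3) - G1 a (m + 2) 0 := by
    rw [← tele]
    exact Finset.sum_congr rfl fun k _ => key1 a (m + 2) k
  have hz1 : G1 a (m + 2) (m + 3) = 0 := by
    unfold G1
    rw [show ((m + 2 : ℕ) : ℤ) - ((m + 3 : ℕ) : ℤ) = (-1 : ℤ) by push_cast; ring,
      show ((m + 2 : ℕ) : ℤ) - 1 - ((m + 3 : ℕ) : ℤ) = (-2 : ℤ) by push_cast; ring,
      czf_neg a (-1) (by norm_num), czf_neg a (-2) (by norm_num)]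
    ring
  have hz0 : G1 a (m + 2) 0 = 0 := by
    unfold G1
    have h := czf_rec a (((m + 2 : ℕ) : ℤ) - 1)
    rw [show ((m + 2 : ℕ) : ℤ) - 1 + 1 = ((m + 2 : ℕ) : ℤ) by ring] at h
    push_cast at h ⊢
    rw [sub_zero, sub_zero, czf_zero]
    linear_combination (-((m : ℚ) + 2)) * h
  rw [hz1, hz0, sub_zero] at main
  rw [Finset.sum_sub_distrib, Finset.sum_sub_distrib, ← Finset.mul_sum, ← Finset.mul_sum,
    ← Finset.mul_sum] at main
  have e2 : ∑ k ∈ Finset.range (m + 3), czf a k * czf a (((m + 2 : ℕ) : ℤ) - 1 - k) =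
      W1f a (m + 1) := by
    rw [Finset.sum_range_succ,
      show ((m + 2 : ℕ) : ℤ) - 1 - ((m + 2 : ℕ) : ℤ) = (-1 : ℤ) by ring,
      czf_neg a (-1) (by norm_num), mul_zero, add_zero]
    exact Finset.sum_congr rfl fun k _ => by rw [show ((m + 2 : ℕ) : ℤ) - 1 - (k : ℤ) =
      ((m + 1 : ℕ) : ℤ) - k by push_cast; ring]
  have e3 : ∑ k ∈ Finset.range (m + 3), czf a k * czf a (((m + 2 : ℕ) : ℤ) - 2 - k) =
      W1f a m := by
    rw [Finset.sum_range_succ, Finset.sum_range_succ,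
      show ((m + 2 : ℕ) : ℤ) - 2 - ((m + 2 : ℕ) : ℤ) = (-2 : ℤ) by ring,
      show ((m + 2 : ℕ) : ℤ) - 2 - ((m + 1 : ℕ) : ℤ) = (-1 : ℤ) by push_cast; ring,
      czf_neg a (-1) (by norm_num), czf_neg a (-2) (by norm_num), mul_zero, mul_zero,
      add_zero, add_zero]
    exact Finset.sum_congr rfl fun k _ => by rw [show ((m + 2 : ℕ) : ℤ) - 2 - (k : ℤ) =
      ((m : ℕ) : ℤ) - k by push_cast; ring]
  rw [e2, e3] at main
  have eW : ∑ k ∈ Finset.range (m + 3), czf a k * czf a (((m + 2 : ℕ) : ℤ) - k) =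
      W1f a (m + 2) := rfl
  rw [eW] at main
  push_cast at main
  linear_combination main

lemma W2f_rec (a : ℚ) (m : ℕ) :
    ((m : ℚ) + 2) ^ 3 * W2f a (m + 2) =
      (2 * ((m : ℚ) + 2) - 1) * (2 * (a ^ 2 + a) - ((m : ℚ) + 2) ^ 2 + ((m : ℚ) + 2)) *
        W2f a (m + 1) +
      (((m : ℚ) + 2) - 1) * (4 * (a ^ 2 + a) + 2 * ((m : ℚ) + 2) - ((m : ℚ) + 2) ^ 2) *
        W2f a m := by
  have tele := Finset.sum_range_sub' (G2 a (m + 2)) (m + 3)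
  have main : ∑ k ∈ Finset.range (m + 3),
      (((m + 2 : ℕ) : ℚ) ^ 3 * (df a k * Bzf k (((m + 2 : ℕ) : ℤ) - k)) -
        (2 * ((m + 2 : ℕ) : ℚ) - 1) * (2 * (a ^ 2 + a) - ((m + 2 : ℕ) : ℚ) ^ 2 + ((m + 2 : ℕ) : ℚ)) *
          (df a k * Bzf k (((m + 2 : ℕ) : ℤ) - 1 - k)) -
        (((m + 2 : ℕ) : ℚ) - 1) * (4 * (a ^ 2 + a) + 2 * ((m + 2 : ℕ) : ℚ) - ((m + 2 : ℕ) : ℚ) ^ 2) *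
          (df a k * Bzf k (((m + 2 : ℕ) : ℤ) - 2 - k))) =
      G2 a (m + 2) 0 - G2 a (m + 2) (m + 3) := by
    rw [← tele]
    exact Finset.sum_congr rfl fun k _ => key2 a (m + 2) k
  have hz1 : G2 a (m + 2) (m + 3) = 0 := by
    unfold G2
    rw [show ((m + 2 : ℕ) : ℤ) - ((m + 3 : ℕ) : ℤ) = (-1 : ℤ) by push_cast; ring,
      Bzf_neg _ (-1) (by norm_num)]
    ring
  have hz0 : G2 a (m + 2) 0 = 0 := by
    unfold G2
    push_cast
    ring
  rw [hz1, hz0, sub_zero] at main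
  rw [Finset.sum_sub_distrib, Finset.sum_sub_distrib, ← Finset.mul_sum, ← Finset.mul_sum,
    ← Finset.mul_sum] at main
  have e2 : ∑ k ∈ Finset.range (m + 3), df a k * Bzf k (((m + 2 : ℕ) : ℤ) - 1 - k) =
      W2f a (m + 1) := by
    rw [Finset.sum_range_succ,
      show ((m + 2 : ℕ) : ℤ) - 1 - ((m + 2 : ℕ) : ℤ) = (-1 : ℤ) by ring,
      Bzf_neg _ (-1) (by norm_num), mul_zero, add_zero]
    exact Finset.sum_congr rfl fun k _ => by rw [show ((m + 2 : ℕ) : ℤ) - 1 - (k : ℤ) =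
      ((m + 1 : ℕ) : ℤ) - k by push_cast; ring]
  have e3 : ∑ k ∈ Finset.range (m + 3), df a k * Bzf k (((m + 2 : ℕ) : ℤ) - 2 - k) =
      W2f a m := by
    rw [Finset.sum_range_succ, Finset.sum_range_succ,
      show ((m + 2 : ℕ) : ℤ) - 2 - ((m + 2 : ℕ) : ℤ) = (-2 : ℤ) by ring,
      show ((m + 2 : ℕ) : ℤ) - 2 - ((m + 1 : ℕ) : ℤ) = (-1 : ℤ) by push_cast; ring,
      Bzf_neg _ (-1) (by norm_num), Bzf_neg _ (-2) (by norm_num), mul_zero, mul_zero,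
      add_zero, add_zero]
    exact Finset.sum_congr rfl fun k _ => by rw [show ((m + 2 : ℕ) : ℤ) - 2 - (k : ℤ) =
      ((m : ℕ) : ℤ) - k by push_cast; ring]
  rw [e2, e3] at main
  have eW : ∑ k ∈ Finset.range (m + 3), df a k * Bzf k (((m + 2 : ℕ) : ℤ) - k) =
      W2f a (m + 2) := rfl
  rw [eW] at main
  push_cast at main
  linear_combination main

lemma neg_pow_cancel (n : ℕ) : ((-1 : ℚ)) ^ n * (-1) ^ n = 1 := by
  rw [← pow_add, ← two_mul, pow_mul]; norm_num

lemma neg_pow_split (n k : ℕ) (h : k ≤ n) : ((-1 : ℚ)) ^ k * (-1) ^ (n - k) = (-1) ^ n := by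
  rw [← pow_add]; congr 1; omega

lemma S1f_eq_W1f (a : ℚ) (n : ℕ) : S1f a n = (-1) ^ n * W1f a n := by
  have hW : W1f a n = (-1) ^ n * S1f a n := by
    unfold W1f S1f
    rw [Finset.mul_sum]
    refine Finset.sum_congr rfl fun k hk => ?_
    have hk' : k ≤ n := Finset.mem_range_succ_iff.mp hk
    rw [show (n : ℤ) - (k : ℤ) = ((n - k : ℕ) : ℤ) by omega, czf_natCast, czf_natCast]
    have h := neg_pow_split n k hk'
    linear_combination
      (gchoose a k * gchoose (-1 - a) k * gchoose a (n - k) * gchoose (-1 - a) (n - k)) * h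
  rw [hW]
  have h := neg_pow_cancel n
  linear_combination (-(S1f a n)) * h

lemma S2f_eq_W2f (a : ℚ) (n : ℕ) : S2f a n = (-1) ^ n * W2f a n := by
  have hW : W2f a n = (-1) ^ n * S2f a n := by
    unfold W2f S2f
    rw [Finset.mul_sum]
    refine Finset.sum_congr rfl fun k hk => ?_
    have hk' : k ≤ n := Finset.mem_range_succ_iff.mp hk
    rw [show (n : ℤ) - (k : ℤ) = ((n - k : ℕ) : ℤ) by omega, Bzf_natCast, df_def]
    have h := neg_pow_split n k hk'
    have hv := neg_pow_cancel (n - k)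
    linear_combination
      (((2 * k).choose k : ℚ) * gchoose a k * gchoose (-1 - a) k * (k.choose (n - k) : ℚ)) *
        ((-1 : ℚ)) ^ (n - k) * h -
      (((2 * k).choose k : ℚ) * gchoose a k * gchoose (-1 - a) k * (k.choose (n - k) : ℚ)) *
        ((-1 : ℚ)) ^ k * hv
  rw [hW]
  have h := neg_pow_cancel n
  linear_combination (-(S2f a n)) * h

theorem S1f_S2f_recurrence (a : ℚ) :
    (S1f a 0 = 1 ∧ S1f a 1 = -2 * a * (a + 1) ∧
      ∀ n : ℕ, 2 ≤ n →
        (n : ℚ) ^ 3 * S1f a n =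
          (2 * n - 1) * ((n : ℚ) ^ 2 - n - 2 * a * (a + 1)) * S1f a (n - 1) +
            ((n : ℚ) - 1) * (2 * a + n) * (2 * a + 2 - n) * S1f a (n - 2)) ∧
    (S2f a 0 = 1 ∧ S2f a 1 = -2 * a * (a + 1) ∧
      ∀ n : ℕ, 2 ≤ n →
        (n : ℚ) ^ 3 * S2f a n =
          (2 * n - 1) * ((n : ℚ) ^ 2 - n - 2 * a * (a + 1)) * S2f a (n - 1) +
            ((n : ℚ) - 1) * (2 * a + n) * (2 * a + 2 - n) * S2f a (n - 2)) := by
  refine ⟨⟨?_, ?_, ?_⟩, ?_, ?_, ?_⟩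
  · simp [S1f, gchoose_zero]
  · have e : S1f a 1 =
        gchoose a 0 * gchoose (-1 - a) 0 * gchoose a 1 * gchoose (-1 - a) 1 +
        gchoose a 1 * gchoose (-1 - a) 1 * gchoose a 0 * gchoose (-1 - a) 0 := by
      simp [S1f, Finset.sum_range_succ]
    rw [e, gchoose_zero, gchoose_zero, gchoose_one, gchoose_one]; ring
  · intro n hn
    obtain ⟨m, rfl⟩ : ∃ m, n = m + 2 := ⟨n - 2, by omega⟩
    have h1 : m + 2 - 1 = m + 1 := rfl
    have h2 : m + 2 - 2 = m := rfl
    rw [h1, h2, S1f_eq_W1f a (m + 2), S1f_eq_W1f a (m + 1), S1f_eq_W1f a m]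
    push_cast
    linear_combination ((-1 : ℚ)) ^ m * W1f_rec a m
  · simp [S2f, gchoose_zero]
  · have e : S2f a 1 =
        ((2 * 0).choose 0 : ℚ) * gchoose a 0 * gchoose (-1 - a) 0 *
          ((Nat.choose 0 1 : ℕ) : ℚ) * (-1) ^ 1 +
        ((2 * 1).choose 1 : ℚ) * gchoose a 1 * gchoose (-1 - a) 1 *
          ((Nat.choose 1 0 : ℕ) : ℚ) * (-1) ^ 0 := by
      simp [S2f, Finset.sum_range_succ]
    rw [e, gchoose_zero, gchoose_zero, gchoose_one, gchoose_one]
    norm_num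
    ring
  · intro n hn
    obtain ⟨m, rfl⟩ : ∃ m, n = m + 2 := ⟨n - 2, by omega⟩
    have h1 : m + 2 - 1 = m + 1 := rfl
    have h2 : m + 2 - 2 = m := rfl
    rw [h1, h2, S2f_eq_W2f a (m + 2), S2f_eq_W2f a (m + 1), S2f_eq_W2f a m]
    push_cast
    linear_combination ((-1 : ℚ)) ^ m * W2f_rec a m
end

section
/- Let p be an odd prime and a a p-adic integer (element of ℤ_p, rationals with denominator coprime to p). Then for every integer k with (p+1)/2 ≤ k ≤ p−1, the product C(a,k)·C(−1−a,k) ≡ 0 (mod p). -/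
theorem gchoose_mul_gchoose_cong_zero (p : ℕ) (hp : p.Prime) (hodd : Odd p)
    (a : ℚ) (ha : IsPInt p a) (k : ℕ) (hk1 : p + 1 ≤ 2 * k) (hk2 : k ≤ p - 1) :
    ModCong p 1 (gchoose a k * gchoose (-1 - a) k) 0 := by
  haveI : Fact p.Prime := ⟨hp⟩
  have hp3 : 3 ≤ p := by
    rcases hp.eq_two_or_odd' with h | _
    · exact absurd h (by rintro rfl; exact (Nat.not_odd_iff_even.mpr (by norm_num)) hodd)
    · omega
  have hk : 1 ≤ k := by omega
  have hkp : k < p := by omega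
  set n : ℤ := a.num with hn
  set d : ℤ := (a.den : ℤ) with hd
  have hd0 : (0:ℤ) < d := by rw [hd]; exact_mod_cast a.pos
  have hdq : (d:ℚ) ≠ 0 := by positivity
  have ha_eq : a = (n:ℚ) / (d:ℚ) := by
    rw [hn, hd]; push_cast; exact (Rat.num_div_den a).symm
  have ha' : ¬ p ∣ a.den := ha
  have hpd : ¬ (p:ℤ) ∣ d := by rw [hd]; exact_mod_cast ha'
  have hdz : ((d:ZMod p) ≠ 0) := by
    rw [Ne, ZMod.intCast_zmod_eq_zero_iff_dvd]; exact hpd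
  obtain ⟨j, hj1, hj2, hjdvd⟩ :
      ∃ j : ℤ, -((k:ℤ) - 1) ≤ j ∧ j ≤ k ∧ (p:ℤ) ∣ n + j * d := by
    set t : ZMod p := -(n : ZMod p) * (d : ZMod p)⁻¹ with ht
    have htv : ((t.val : ℤ) : ZMod p) = t := by
      push_cast
      simp [ZMod.natCast_val, ZMod.cast_id]
    have hvlt : (t.val : ℤ) < p := by exact_mod_cast t.val_lt
    have hvnn : (0:ℤ) ≤ (t.val : ℤ) := Int.natCast_nonneg _
    have key : ∀ j : ℤ, (j : ZMod p) = t → (p:ℤ) ∣ n + j * d := by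
      intro j hj
      rw [← ZMod.intCast_zmod_eq_zero_iff_dvd]
      push_cast
      rw [hj, ht]
      field_simp
      ring
    by_cases hc : (t.val : ℤ) ≤ k
    · exact ⟨t.val, by omega, hc, key _ htv⟩
    · refine ⟨(t.val : ℤ) - p, by omega, by omega, key _ ?_⟩
      push_cast
      simp [htv]
  set P1 : ℤ := ∏ i ∈ Finset.range k, (n - i * d) with hP1
  set P2 : ℤ := ∏ i ∈ Finset.range k, (-d - n - i * d) with hP2
  set Q : ℤ := d ^ k * d ^ k * (k.factorial : ℤ) * (k.factorial : ℤ) with hQ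
  have hfac : (k.factorial : ℚ) ≠ 0 := by exact_mod_cast k.factorial_ne_zero
  -- main equality
  have e1 : ∏ i ∈ Finset.range k, (a - i) = ((P1 : ℤ) : ℚ) / (d:ℚ) ^ k := by
    have : ∀ i ∈ Finset.range k, a - (i:ℚ) = ((n - i * d : ℤ):ℚ) / (d:ℚ) := by
      intro i _; rw [ha_eq]; push_cast
      rw [div_sub' hdq]
      ring_nf
    rw [Finset.prod_congr rfl this, Finset.prod_div_distrib, Finset.prod_const,
      Finset.card_range, hP1]
    push_cast
    ring
  have e2 : ∏ i ∈ Finset.range k, (-1 - a - i) = ((P2 : ℤ) : ℚ) / (d:ℚ) ^ k := by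
    have : ∀ i ∈ Finset.range k, -1 - a - (i:ℚ) = ((-d - n - i * d : ℤ):ℚ) / (d:ℚ) := by
      intro i _; rw [ha_eq]; push_cast
      rw [eq_div_iff hdq, sub_mul, sub_mul, div_mul_cancel₀ _ hdq]
      ring
    rw [Finset.prod_congr rfl this, Finset.prod_div_distrib, Finset.prod_const,
      Finset.card_range, hP2]
    push_cast
    ring
  have hkey : gchoose a k * gchoose (-1 - a) k = ((P1 * P2 : ℤ) : ℚ) / (Q : ℚ) := by
    rw [gchoose, gchoose, e1, e2, hQ]
    push_cast
    ring
  -- p divides P1 * P2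
  have hdvdP : (p:ℤ) ∣ P1 * P2 := by
    by_cases hc : j ≤ 0
    · refine Dvd.dvd.mul_right ?_ _
      have hmem : (-j).toNat ∈ Finset.range k := by
        simp only [Finset.mem_range]; omega
      refine dvd_trans ?_ (Finset.dvd_prod_of_mem _ hmem)
      have : ((-j).toNat : ℤ) = -j := Int.toNat_of_nonneg (by omega)
      rw [this]
      convert hjdvd using 1
      · rfl
      ring
    · refine Dvd.dvd.mul_left ?_ _
      have hmem : (j - 1).toNat ∈ Finset.range k := by
        simp only [Finset.mem_range]; omega
      refine dvd_trans ?_ (Finset.dvd_prod_of_mem _ hmem)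
      have : ((j - 1).toNat : ℤ) = j - 1 := Int.toNat_of_nonneg (by omega)
      rw [this]
      have heq : -d - n - (j - 1) * d = -(n + j * d) := by ring
      rw [heq]
      exact hjdvd.neg_right
  -- assemble
  refine ⟨((P1 * P2 / p : ℤ) : ℚ) / (Q : ℚ), ?_, ?_⟩
  · intro hdvd
    have h1 : (((P1 * P2 / p : ℤ) : ℚ) / (Q : ℚ)) = Rat.divInt (P1 * P2 / p) Q := by
      rw [Rat.divInt_eq_div]
    rw [h1] at hdvd
    have h2 : ((Rat.divInt (P1 * P2 / p) Q).den : ℤ) ∣ Q := Rat.den_dvd _ _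
    have h3 : (p : ℤ) ∣ Q := dvd_trans (by exact_mod_cast hdvd) h2
    rw [hQ] at h3
    have hpf : ¬ (p:ℤ) ∣ (k.factorial : ℤ) := by
      rw [Int.natCast_dvd_natCast]
      rw [hp.dvd_factorial]
      omega
    rcases (Int.Prime.dvd_mul' (by exact_mod_cast hp) h3) with h | h
    · rcases (Int.Prime.dvd_mul' (by exact_mod_cast hp) h) with h' | h'
      · rcases (Int.Prime.dvd_mul' (by exact_mod_cast hp) h') with h'' | h''
        · exact hpd (Int.Prime.dvd_pow' (by exact_mod_cast hp) h'')
        · exact hpd (Int.Prime.dvd_pow' (by exact_mod_cast hp) h'')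
      · exact hpf h'
    · exact hpf h
  · rw [sub_zero, hkey, pow_one]
    have hc : (p:ℤ) * (P1 * P2 / (p:ℤ)) = P1 * P2 := Int.mul_ediv_cancel' hdvdP
    have hcq : ((P1 * P2 : ℤ) : ℚ) = (p:ℚ) * ((P1 * P2 / (p:ℤ) : ℤ) : ℚ) := by
      exact_mod_cast congrArg (Int.cast : ℤ → ℚ) hc.symm
    rw [hcq]
    ring
end

section
/- Let p be an odd prime, a ∈ ℤ_p, and let ⟨a⟩ ∈ {0,1,…,p−1} satisfy a ≡ ⟨a⟩ (mod p). Then for every x, ∑_{k=0}^{p−1} C(2k,k)·C(a,k)·C(−1−a,k)·x^k ≡ P_{⟨a⟩}(√(1−4x))² (mod p), where P_{⟨a⟩}(√(1−4x))² is interpreted via the polynomial identity P_n(√(1+4y))² = ∑_{k=0}^{n} C(n,k)C(n+k,k)C(2k,k)y^k with y = −x. -/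
section aux

variable {p : ℕ}

lemma isPInt_iff (hp : p.Prime) (x : ℚ) : IsPInt p x ↔ padicNorm p x ≤ 1 := by
  haveI : Fact p.Prime := ⟨hp⟩
  constructor
  · intro h
    have hx : x = (x.num : ℚ) / (x.den : ℚ) := (Rat.num_div_den x).symm
    rw [hx, padicNorm.div, (padicNorm.nat_eq_one_iff _).mpr h, div_one]
    exact padicNorm.of_int x.num
  · intro h hd
    have hnum : ¬ (p : ℤ) ∣ x.num := by
      intro hn
      have h1 : p ∣ x.num.natAbs := by
        have := Int.natAbs_dvd_natAbs.mpr hn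
        simpa using this
      have h2 := Nat.dvd_gcd h1 hd
      rw [Nat.Coprime.gcd_eq_one x.reduced] at h2
      exact hp.one_lt.ne' (Nat.dvd_one.mp h2)
    have hx : x = (x.num : ℚ) / (x.den : ℚ) := (Rat.num_div_den x).symm
    have hden : padicNorm p (x.den : ℚ) < 1 := (padicNorm.nat_lt_one_iff _).mpr hd
    have hden0 : padicNorm p (x.den : ℚ) ≠ 0 := by
      intro h0
      have := padicNorm.zero_of_padicNorm_eq_zero h0
      exact_mod_cast x.den_nz (by exact_mod_cast this)
    have hdenpos : 0 < padicNorm p (x.den : ℚ) :=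
      lt_of_le_of_ne (padicNorm.nonneg _) (Ne.symm hden0)
    rw [hx, padicNorm.div, (padicNorm.int_eq_one_iff _).mpr hnum] at h
    have := (div_le_one hdenpos).mp h
    exact absurd this (not_le.mpr hden)

lemma pnorm_lt_one_le_inv (hp : p.Prime) {x : ℚ} (h : padicNorm p x < 1) :
    padicNorm p x ≤ (p : ℚ)⁻¹ := by
  rcases eq_or_ne x 0 with rfl | hx
  · rw [padicNorm.zero]
    positivity
  · obtain ⟨n, hn⟩ := padicNorm.values_discrete (p := p) hx
    have hp1 : (1 : ℚ) < p := by exact_mod_cast hp.one_lt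
    rw [hn] at h ⊢
    have h0 : (p : ℚ) ^ (-n) < (p : ℚ) ^ (0 : ℤ) := by simpa using h
    have hlt : -n < 0 := (zpow_lt_zpow_iff_right₀ hp1).mp h0
    have : (p : ℚ) ^ (-n) ≤ (p : ℚ) ^ (-1 : ℤ) :=
      zpow_le_zpow_right₀ hp1.le (by omega)
    simpa [zpow_neg] using this

lemma modCong_iff (hp : p.Prime) (x y : ℚ) :
    ModCong p 1 x y ↔ padicNorm p (x - y) < 1 := by
  haveI : Fact p.Prime := ⟨hp⟩
  have hp0 : (p : ℚ) ≠ 0 := by exact_mod_cast hp.pos.ne'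
  have hpinv : (p : ℚ)⁻¹ < 1 := by
    rw [inv_lt_one_iff₀]; right; exact_mod_cast hp.one_lt
  constructor
  · rintro ⟨z, hz, heq⟩
    rw [heq, pow_one, padicNorm.mul, padicNorm.padicNorm_p hp.one_lt]
    have hz1 : padicNorm p z ≤ 1 := (isPInt_iff hp z).mp hz
    calc (p : ℚ)⁻¹ * padicNorm p z ≤ (p : ℚ)⁻¹ * 1 := by
          apply mul_le_mul_of_nonneg_left hz1; positivity
      _ < 1 := by simpa using hpinv
  · intro h
    refine ⟨(x - y) / p, ?_, by field_simp⟩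
    rw [← IsPInt, isPInt_iff hp, padicNorm.div, padicNorm.padicNorm_p hp.one_lt,
      div_le_one (by positivity)]
    exact pnorm_lt_one_le_inv hp h

lemma pnorm_fact (hp : p.Prime) {k : ℕ} (hk : k < p) :
    padicNorm p (Nat.factorial k : ℚ) = 1 := by
  haveI : Fact p.Prime := ⟨hp⟩
  exact (padicNorm.nat_eq_one_iff _).mpr
    (fun hd => absurd ((Nat.Prime.dvd_factorial hp).mp hd) (not_le.mpr hk))

lemma pnorm_sub_nat_le (hp : p.Prime) {a : ℚ} (ha : padicNorm p a ≤ 1) (i : ℕ) :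
    padicNorm p (a - i) ≤ 1 := by
  haveI : Fact p.Prime := ⟨hp⟩
  exact padicNorm.sub.trans (max_le ha (padicNorm.of_nat i))

lemma pnorm_prod_le (hp : p.Prime) {a : ℚ} (ha : padicNorm p a ≤ 1) (k : ℕ) :
    padicNorm p (∏ i ∈ Finset.range k, (a - i)) ≤ 1 := by
  haveI : Fact p.Prime := ⟨hp⟩
  induction k with
  | zero => simp [padicNorm.one]
  | succ k ih =>
    rw [Finset.prod_range_succ, padicNorm.mul]
    exact mul_le_one₀ ih (padicNorm.nonneg _) (pnorm_sub_nat_le hp ha k)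

lemma pnorm_prod_sub (hp : p.Prime) {a b : ℚ} (ha : padicNorm p a ≤ 1)
    (hb : padicNorm p b ≤ 1) (hab : padicNorm p (a - b) < 1) (k : ℕ) :
    padicNorm p (∏ i ∈ Finset.range k, (a - i) - ∏ i ∈ Finset.range k, (b - i)) < 1 := by
  haveI : Fact p.Prime := ⟨hp⟩
  induction k with
  | zero => simpa using one_pos
  | succ k ih =>
    have key : ∏ i ∈ Finset.range (k+1), (a - i) - ∏ i ∈ Finset.range (k+1), (b - i)
        = (∏ i ∈ Finset.range k, (a - i)) * (a - b)
          + (∏ i ∈ Finset.range k, (a - i) - ∏ i ∈ Finset.range k, (b - i)) * (b - k) := by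
      rw [Finset.prod_range_succ, Finset.prod_range_succ]; ring
    rw [key]
    refine lt_of_le_of_lt padicNorm.nonarchimedean (max_lt ?_ ?_)
    · rw [padicNorm.mul]
      calc padicNorm p (∏ i ∈ Finset.range k, (a - i)) * padicNorm p (a - b)
          ≤ 1 * padicNorm p (a - b) := by
            apply mul_le_mul_of_nonneg_right (pnorm_prod_le hp ha k) (padicNorm.nonneg _)
        _ < 1 := by simpa using hab
    · rw [padicNorm.mul]
      calc padicNorm p (∏ i ∈ Finset.range k, (a - i) - ∏ i ∈ Finset.range k, (b - i))
            * padicNorm p (b - k)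
          ≤ padicNorm p (∏ i ∈ Finset.range k, (a - i) - ∏ i ∈ Finset.range k, (b - i)) * 1 := by
            apply mul_le_mul_of_nonneg_left (pnorm_sub_nat_le hp hb k) (padicNorm.nonneg _)
        _ < 1 := by simpa using ih

lemma pnorm_pow_le (hp : p.Prime) {x : ℚ} (hx : padicNorm p x ≤ 1) (k : ℕ) :
    padicNorm p (x ^ k) ≤ 1 := by
  haveI : Fact p.Prime := ⟨hp⟩
  induction k with
  | zero => simp [padicNorm.one]
  | succ k ih =>
    rw [pow_succ, padicNorm.mul]
    exact mul_le_one₀ ih (padicNorm.nonneg _) hx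

lemma pnorm_gchoose_le (hp : p.Prime) {a : ℚ} (ha : padicNorm p a ≤ 1) {k : ℕ} (hk : k < p) :
    padicNorm p (gchoose a k) ≤ 1 := by
  haveI : Fact p.Prime := ⟨hp⟩
  rw [gchoose, padicNorm.div, pnorm_fact hp hk, div_one]
  exact pnorm_prod_le hp ha k

lemma pnorm_gchoose_sub (hp : p.Prime) {a b : ℚ} (ha : padicNorm p a ≤ 1)
    (hb : padicNorm p b ≤ 1) (hab : padicNorm p (a - b) < 1) {k : ℕ} (hk : k < p) :
    padicNorm p (gchoose a k - gchoose b k) < 1 := by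
  haveI : Fact p.Prime := ⟨hp⟩
  rw [gchoose, gchoose, div_sub_div_same, padicNorm.div, pnorm_fact hp hk, div_one]
  exact pnorm_prod_sub hp ha hb hab k

lemma prod_cast_desc (n k : ℕ) :
    ∏ i ∈ Finset.range k, ((n : ℚ) - i) = (n.descFactorial k : ℚ) := by
  induction k with
  | zero => simp
  | succ k ih =>
    rw [Finset.prod_range_succ, ih, Nat.descFactorial_succ]
    rcases le_or_gt k n with h | h
    · push_cast [Nat.cast_sub h]; ring
    · rw [Nat.descFactorial_eq_zero_iff_lt.mpr h]
      simp

lemma gchoose_nat (n k : ℕ) : gchoose (n : ℚ) k = (n.choose k : ℚ) := by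
  rw [gchoose, prod_cast_desc, Nat.descFactorial_eq_factorial_mul_choose]
  have : (Nat.factorial k : ℚ) ≠ 0 := by exact_mod_cast (Nat.factorial_ne_zero k)
  push_cast
  field_simp

lemma prod_cast_asc (n k : ℕ) :
    ∏ i ∈ Finset.range k, ((n : ℚ) + 1 + i) = ((n + 1).ascFactorial k : ℚ) := by
  induction k with
  | zero => simp
  | succ k ih =>
    rw [Finset.prod_range_succ, ih, Nat.ascFactorial_succ]
    push_cast
    ring

lemma gchoose_neg (n k : ℕ) :
    gchoose (-1 - (n : ℚ)) k = (-1) ^ k * ((n + k).choose k : ℚ) := by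
  have h1 : ∏ i ∈ Finset.range k, (-1 - (n : ℚ) - i)
      = (-1) ^ k * ∏ i ∈ Finset.range k, ((n : ℚ) + 1 + i) := by
    calc ∏ i ∈ Finset.range k, (-1 - (n : ℚ) - i)
        = ∏ i ∈ Finset.range k, ((-1) * ((n : ℚ) + 1 + i)) :=
          Finset.prod_congr rfl (fun i _ => by ring)
      _ = (∏ _i ∈ Finset.range k, (-1 : ℚ)) * ∏ i ∈ Finset.range k, ((n : ℚ) + 1 + i) :=
          Finset.prod_mul_distrib
      _ = (-1) ^ k * ∏ i ∈ Finset.range k, ((n : ℚ) + 1 + i) := by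
          rw [Finset.prod_const, Finset.card_range]
  rw [gchoose, h1, prod_cast_asc, Nat.ascFactorial_eq_factorial_mul_choose]
  have : (Nat.factorial k : ℚ) ≠ 0 := by exact_mod_cast (Nat.factorial_ne_zero k)
  push_cast
  field_simp

end aux

theorem sum_cong_legendre_sq (p : ℕ) (hp : p.Prime) (hodd : Odd p)
    (a x : ℚ) (ha : IsPInt p a) (hx : IsPInt p x)
    (r : ℕ) (hr : r < p) (har : ModCong p 1 a r) :
    ModCong p 1
      (∑ k ∈ Finset.range p,
        ((2 * k).choose k : ℚ) * gchoose a k * gchoose (-1 - a) k * x ^ k)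
      (∑ k ∈ Finset.range (r + 1),
        (r.choose k : ℚ) * ((r + k).choose k) * ((2 * k).choose k) * (-x) ^ k) := by
  haveI : Fact p.Prime := ⟨hp⟩
  have hna : padicNorm p a ≤ 1 := (isPInt_iff hp a).mp ha
  have hnx : padicNorm p x ≤ 1 := (isPInt_iff hp x).mp hx
  have hnr : padicNorm p (r : ℚ) ≤ 1 := padicNorm.of_nat r
  have hnar : padicNorm p (a - r) < 1 := (modCong_iff hp a r).mp har
  -- extend RHS sum to range p
  have hsub : Finset.range (r + 1) ⊆ Finset.range p := Finset.range_subset_range.mpr hr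
  have hext : (∑ k ∈ Finset.range (r + 1),
      (r.choose k : ℚ) * ((r + k).choose k) * ((2 * k).choose k) * (-x) ^ k)
      = ∑ k ∈ Finset.range p,
      (r.choose k : ℚ) * ((r + k).choose k) * ((2 * k).choose k) * (-x) ^ k := by
    apply Finset.sum_subset hsub
    intro k _ hk
    have : r < k := by
      simp only [Finset.mem_range, not_lt] at hk
      omega
    rw [Nat.choose_eq_zero_of_lt this]
    simp
  rw [modCong_iff hp, hext, ← Finset.sum_sub_distrib]
  apply padicNorm.sum_lt' _ one_pos
  intro k hk
  rw [Finset.mem_range] at hk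
  -- rewrite the second term
  have hB : (r.choose k : ℚ) * ((r + k).choose k) * ((2 * k).choose k) * (-x) ^ k
      = ((2 * k).choose k : ℚ) * gchoose (r : ℚ) k * gchoose (-1 - (r : ℚ)) k * x ^ k := by
    rw [gchoose_nat, gchoose_neg, neg_pow]
    ring
  rw [hB]
  have key : ((2 * k).choose k : ℚ) * gchoose a k * gchoose (-1 - a) k * x ^ k
      - ((2 * k).choose k : ℚ) * gchoose (r : ℚ) k * gchoose (-1 - (r : ℚ)) k * x ^ k
      = ((2 * k).choose k : ℚ) * x ^ k *
        (gchoose a k * (gchoose (-1 - a) k - gchoose (-1 - (r : ℚ)) k)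
          + (gchoose a k - gchoose (r : ℚ) k) * gchoose (-1 - (r : ℚ)) k) := by
    ring
  rw [key, padicNorm.mul, padicNorm.mul]
  have h2k : padicNorm p ((2 * k).choose k : ℚ) ≤ 1 := padicNorm.of_nat _
  have hxk : padicNorm p (x ^ k) ≤ 1 := pnorm_pow_le hp hnx k
  have hn1a : padicNorm p (-1 - a) ≤ 1 := by
    refine padicNorm.sub.trans (max_le ?_ hna)
    rw [padicNorm.neg, padicNorm.one]
  have hn1r : padicNorm p (-1 - (r : ℚ)) ≤ 1 := by
    refine padicNorm.sub.trans (max_le ?_ hnr)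
    rw [padicNorm.neg, padicNorm.one]
  have hdshift : padicNorm p ((-1 - a) - (-1 - (r : ℚ))) < 1 := by
    have : (-1 - a) - (-1 - (r : ℚ)) = -(a - (r : ℚ)) := by ring
    rwa [this, padicNorm.neg]
  have hbr : padicNorm p
      (gchoose a k * (gchoose (-1 - a) k - gchoose (-1 - (r : ℚ)) k)
        + (gchoose a k - gchoose (r : ℚ) k) * gchoose (-1 - (r : ℚ)) k) < 1 := by
    refine lt_of_le_of_lt padicNorm.nonarchimedean (max_lt ?_ ?_)
    · rw [padicNorm.mul]
      calc padicNorm p (gchoose a k) *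
            padicNorm p (gchoose (-1 - a) k - gchoose (-1 - (r : ℚ)) k)
          ≤ 1 * padicNorm p (gchoose (-1 - a) k - gchoose (-1 - (r : ℚ)) k) := by
            apply mul_le_mul_of_nonneg_right (pnorm_gchoose_le hp hna hk) (padicNorm.nonneg _)
        _ < 1 := by simpa using pnorm_gchoose_sub hp hn1a hn1r hdshift hk
    · rw [padicNorm.mul]
      calc padicNorm p (gchoose a k - gchoose (r : ℚ) k) * padicNorm p (gchoose (-1 - (r : ℚ)) k)
          ≤ padicNorm p (gchoose a k - gchoose (r : ℚ) k) * 1 := by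
            apply mul_le_mul_of_nonneg_left (pnorm_gchoose_le hp hn1r hk) (padicNorm.nonneg _)
        _ < 1 := by simpa using pnorm_gchoose_sub hp hna hnr hnar hk
  calc padicNorm p ((2 * k).choose k : ℚ) * padicNorm p (x ^ k) * padicNorm p
        (gchoose a k * (gchoose (-1 - a) k - gchoose (-1 - (r : ℚ)) k)
          + (gchoose a k - gchoose (r : ℚ) k) * gchoose (-1 - (r : ℚ)) k)
      ≤ 1 * 1 * padicNorm p
        (gchoose a k * (gchoose (-1 - a) k - gchoose (-1 - (r : ℚ)) k)
          + (gchoose a k - gchoose (r : ℚ) k) * gchoose (-1 - (r : ℚ)) k) := by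
        apply mul_le_mul_of_nonneg_right _ (padicNorm.nonneg _)
        calc padicNorm p ((2 * k).choose k : ℚ) * padicNorm p (x ^ k)
            ≤ 1 * 1 := mul_le_mul h2k hxk (padicNorm.nonneg _) zero_le_one
          _ = 1 * 1 := rfl
    _ < 1 := by simpa using hbr
end

section
/- Let p be an odd prime and n a nonnegative integer with 0 ≤ n ≤ p−1. Then P_{p−1−n}(t) ≡ P_n(t) (mod p) as polynomials, i.e., all coefficients of P_{p−1−n}(t) − P_n(t) are rationals with numerator divisible by p (denominators prime to p). -/
open Polynomial Finset in
lemma natkey (a k : ℕ) :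
    (k.factorial)^2 * (a.choose k * ((a+k).choose k)) =
      a.descFactorial k * (a+1).ascFactorial k := by
  rw [Nat.descFactorial_eq_factorial_mul_choose, Nat.ascFactorial_eq_factorial_mul_choose]
  ring

lemma asc_prod (n k : ℕ) : ((n.ascFactorial k : ℤ)) = ∏ i ∈ Finset.range k, ((n:ℤ) + i) := by
  induction k with
  | zero => simp
  | succ k ih =>
    rw [Nat.ascFactorial_succ, Finset.prod_range_succ, ← ih]
    push_cast
    ring

lemma prodZ (a k : ℕ) :
    (∏ i ∈ Finset.range k, (((a:ℤ) - i) * ((a:ℤ) + i + 1))) =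
      (a.descFactorial k : ℤ) * ((a+1).ascFactorial k : ℤ) := by
  rw [Finset.prod_mul_distrib]
  congr 1
  · rcases le_or_gt k a with h | h
    · rw [Nat.descFactorial_eq_prod_range, Nat.cast_prod]
      refine (Finset.prod_congr rfl fun i hi => ?_).symm
      rw [Finset.mem_range] at hi
      have : i ≤ a := le_trans (Nat.le_of_lt hi) h
      push_cast [Nat.cast_sub this]
      ring
    · rw [Nat.descFactorial_eq_zero_iff_lt.2 h, Nat.cast_zero]
      exact Finset.prod_eq_zero (Finset.mem_range.mpr h) (by ring)
  · rw [asc_prod]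
    refine Finset.prod_congr rfl fun i _ => ?_
    push_cast
    ring

lemma keyZ (a k : ℕ) :
    ((k.factorial : ℤ))^2 * ((a.choose k : ℤ) * ((a+k).choose k : ℤ)) =
      ∏ i ∈ Finset.range k, (((a:ℤ) - i) * ((a:ℤ) + i + 1)) := by
  rw [prodZ]
  exact_mod_cast congrArg (Nat.cast : ℕ → ℤ) (natkey a k)

lemma coeff_cong (p : ℕ) (hp : p.Prime) (n k : ℕ) (hk : k < p) (hn : n ≤ p - 1) :
    (p:ℤ) ∣ (((p-1-n).choose k : ℤ) * ((((p-1-n)+k).choose k : ℤ))) -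
      ((n.choose k : ℤ) * (((n+k).choose k : ℤ))) := by
  haveI : Fact p.Prime := ⟨hp⟩
  set m := p - 1 - n with hm
  rw [← ZMod.intCast_zmod_eq_zero_iff_dvd]
  push_cast
  rw [sub_eq_zero]
  have hfac : ((k.factorial : ZMod p)) ≠ 0 := by
    intro h
    rw [ZMod.natCast_eq_zero_iff] at h
    exact absurd (hp.dvd_factorial.mp h) (by omega)
  apply mul_left_cancel₀ (pow_ne_zero 2 hfac)
  have h1 := congrArg (Int.cast : ℤ → ZMod p) (keyZ m k)
  have h2 := congrArg (Int.cast : ℤ → ZMod p) (keyZ n k)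
  push_cast at h1 h2
  have hmp : ((m : ZMod p)) = -(n : ZMod p) - 1 := by
    have hpn : m + (n + 1) = p := by
      have := hp.one_le
      omega
    have := congrArg (Nat.cast : ℕ → ZMod p) hpn
    push_cast at this
    rw [ZMod.natCast_self] at this
    linear_combination this
  rw [hmp] at h1
  have hprod : (∏ i ∈ Finset.range k, ((-(n:ZMod p) - 1 - i) * (-(n:ZMod p) - 1 + i + 1))) =
      ∏ i ∈ Finset.range k, (((n:ZMod p) - i) * ((n:ZMod p) + i + 1)) :=
    Finset.prod_congr rfl fun i _ => by ring
  rw [hprod] at h1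
  linear_combination h1 - h2

lemma legendre_ext (n N : ℕ) (h : n + 1 ≤ N) :
    legendre n = ∑ k ∈ Finset.range N,
      Polynomial.C ((n.choose k : ℚ) * ((n + k).choose k)) *
        (Polynomial.C (1/2 : ℚ) * (Polynomial.X - 1)) ^ k := by
  unfold legendre
  refine Finset.sum_subset (Finset.range_subset_range.mpr h) fun k _ hk => ?_
  rw [Finset.mem_range, not_lt] at hk
  have : n.choose k = 0 := Nat.choose_eq_zero_of_lt (by omega)
  simp [this]

theorem legendre_cong (p : ℕ) (hp : p.Prime) (hodd : Odd p)
    (n : ℕ) (hn : n ≤ p - 1) (i : ℕ) :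
    ModCong p 1 ((legendre (p - 1 - n)).coeff i) ((legendre n).coeff i) := by
  have hp1 : 1 ≤ p := hp.one_le
  set m := p - 1 - n with hm
  have hNm : m + 1 ≤ p := by omega
  have hNn : n + 1 ≤ p := by omega
  -- coefficient difference as sum
  have hco : (legendre m).coeff i - (legendre n).coeff i
      = ∑ k ∈ Finset.range p,
          (((m.choose k : ℚ) * ((m+k).choose k)) - ((n.choose k : ℚ) * ((n+k).choose k))) *
            ((Polynomial.C (1/2:ℚ) * (Polynomial.X - 1))^k).coeff i := by
    rw [legendre_ext m p hNm, legendre_ext n p hNn, Polynomial.finset_sum_coeff,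
      Polynomial.finset_sum_coeff, ← Finset.sum_sub_distrib]
    refine Finset.sum_congr rfl fun k _ => ?_
    rw [Polynomial.coeff_C_mul, Polynomial.coeff_C_mul]
    ring
  -- the integer witnesses
  set zint : ℕ → ℤ := fun k =>
    (((m.choose k : ℤ) * (((m+k).choose k : ℤ))) - ((n.choose k : ℤ) * (((n+k).choose k : ℤ)))) / p
    with hzint
  have hz : ∀ k < p, (p : ℤ) * zint k =
      ((m.choose k : ℤ) * (((m+k).choose k : ℤ))) - ((n.choose k : ℤ) * (((n+k).choose k : ℤ))) :=
    fun k hk => Int.mul_ediv_cancel' (coeff_cong p hp n k hk hn)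
  set w : ℕ → ℤ := fun k => ((Polynomial.X - 1 : Polynomial ℤ)^k).coeff i with hwdef
  have hw : ∀ k, ((Polynomial.C (1/2:ℚ) * (Polynomial.X - 1))^k).coeff i
      = (1/2:ℚ)^k * ((w k : ℚ)) := by
    intro k
    rw [mul_pow, ← Polynomial.C_pow, Polynomial.coeff_C_mul]
    congr 1
    have hmap : ((Polynomial.X - 1 : Polynomial ℚ))^k
        = Polynomial.map (Int.castRingHom ℚ) ((Polynomial.X - 1)^k) := by
      simp [Polynomial.map_pow]
    rw [hmap, Polynomial.coeff_map]
    rfl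
  set Z : ℚ := ∑ k ∈ Finset.range p, (zint k : ℚ) * ((1/2)^k * (w k : ℚ)) with hZ
  refine ⟨Z, ?_, ?_⟩
  · -- denominator of Z not divisible by p
    set A : ℤ := ∑ k ∈ Finset.range p, zint k * w k * 2^(p-1-k) with hA
    have hZA : Z = (A : ℚ) / ((2:ℤ)^(p-1) : ℤ) := by
      rw [eq_div_iff (by positivity), hZ, hA, Finset.sum_mul]
      push_cast
      refine Finset.sum_congr rfl fun k hk => ?_
      rw [Finset.mem_range] at hk
      have hsplit : (2:ℚ)^(p-1) = 2^k * 2^(p-1-k) := by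
        rw [← pow_add]
        congr 1
        omega
      rw [mul_assoc, mul_assoc, hsplit]
      rw [one_div, inv_pow]
      field_simp
    intro hdvd
    have hden : ((Z.den : ℤ)) ∣ (2:ℤ)^(p-1) := by
      have := Rat.den_dvd A ((2:ℤ)^(p-1))
      rwa [Rat.divInt_eq_div, ← hZA] at this
    have : (p : ℤ) ∣ (2:ℤ)^(p-1) := dvd_trans (Int.natCast_dvd_natCast.mpr hdvd) hden
    have hp2 : p ∣ 2^(p-1) := by exact_mod_cast this
    have := hp.dvd_of_dvd_pow hp2
    have hp2' : p = 2 := (Nat.prime_dvd_prime_iff_eq hp Nat.prime_two).mp this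
    rw [hp2'] at hodd
    exact absurd hodd (by decide)
  · rw [pow_one, hco, hZ, Finset.mul_sum]
    refine Finset.sum_congr rfl fun k hk => ?_
    rw [Finset.mem_range] at hk
    have := hz k hk
    have hcast : ((m.choose k : ℚ) * ((m+k).choose k)) - ((n.choose k : ℚ) * ((n+k).choose k))
        = (p : ℚ) * (zint k : ℚ) := by
      exact_mod_cast congrArg (Int.cast : ℤ → ℚ) this.symm
    rw [hw k, hcast]
    ring
end

section
/- For rational x with |4x(1−x)| small enough (as a formal power series identity in x): (∑_{k=0}^∞ (a)_k(1−a)_k/(k!)² · x^k)² = ∑_{k=0}^∞ (a)_k(1−a)_k/(k!)² · C(2k,k) · (x(1−x))^k, as an identity of formal power series over ℚ for any rational parameter a. -/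
namespace ClausenGaussAux

open Finset

noncomputable def cc (a : ℚ) (k : ℕ) : ℚ :=
  Polynomial.eval a (ascPochhammer ℚ k) *
    Polynomial.eval (1 - a) (ascPochhammer ℚ k) / (k.factorial : ℚ) ^ 2

lemma cc_zero (a : ℚ) : cc a 0 = 1 := by simp [cc]

lemma cc_rec (a : ℚ) (k : ℕ) :
    ((k : ℚ) + 1) ^ 2 * cc a (k + 1) = ((k : ℚ) ^ 2 + k + a * (1 - a)) * cc a k := by
  have hf : ((k.factorial : ℚ)) ≠ 0 := Nat.cast_ne_zero.mpr k.factorial_ne_zero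
  have hk : ((k : ℚ) + 1) ≠ 0 := by positivity
  simp only [cc, ascPochhammer_succ_right, Polynomial.eval_mul, Polynomial.eval_add,
    Polynomial.eval_X, Polynomial.eval_natCast, Nat.factorial_succ]
  push_cast
  field_simp
  ring

lemma cc_one (a : ℚ) : cc a 1 = a * (1 - a) := by
  have h := cc_rec a 0
  simpa [cc_zero] using h

noncomputable def dd (a : ℚ) (k : ℕ) : ℚ := cc a k * ((2 * k).choose k : ℚ)

lemma dd_rec (a : ℚ) (k : ℕ) :
    ((k : ℚ) + 1) ^ 3 * dd a (k + 1) =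
      2 * (2 * (k : ℚ) + 1) * ((k : ℚ) ^ 2 + k + a * (1 - a)) * dd a k := by
  have hcb : ((k + 1) * Nat.centralBinom (k + 1) : ℚ) =
      (2 * (2 * k + 1) * Nat.centralBinom k : ℚ) := by
    exact_mod_cast congrArg (Nat.cast : ℕ → ℚ) (Nat.succ_mul_centralBinom_succ k)
  have hc := cc_rec a k
  simp only [dd, Nat.centralBinom] at *
  push_cast at hcb ⊢
  linear_combination (((2 * (k + 1)).choose (k + 1) : ℚ) * ((k : ℚ) + 1)) * hc +
    (((k : ℚ) ^ 2 + k + a * (1 - a)) * cc a k) * hcb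

lemma RQ (n k : ℕ) :
    ((k : ℚ) + 1) * (n.choose (k + 1) : ℚ) = ((n : ℚ) - k) * (n.choose k : ℚ) := by
  rcases le_or_gt (k + 1) n with h | h
  · have h2 := congrArg (Nat.cast : ℕ → ℚ) (Nat.choose_succ_right_eq n k)
    push_cast [Nat.cast_sub (show k ≤ n by omega)] at h2
    linear_combination h2
  · have h1 : n.choose (k + 1) = 0 := Nat.choose_eq_zero_of_lt (by omega)
    rcases lt_or_eq_of_le (Nat.lt_succ_iff.mp h) with h' | h'
    · simp [h1, Nat.choose_eq_zero_of_lt h']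
    · subst h'
      simp [h1]

lemma coeff_one_sub_X_pow (k m : ℕ) :
    PowerSeries.coeff m ((1 - PowerSeries.X) ^ k) = (-1 : ℚ) ^ m * (k.choose m : ℚ) := by
  have h : ((1 : PowerSeries ℚ) - PowerSeries.X) ^ k =
      ∑ i ∈ range (k + 1),
        (-PowerSeries.X) ^ i * 1 ^ (k - i) * (k.choose i : PowerSeries ℚ) := by
    rw [sub_eq_add_neg, add_comm]
    exact add_pow (-PowerSeries.X) 1 k
  rw [h, map_sum]
  have hterm : ∀ i ∈ range (k + 1),
      PowerSeries.coeff m ((-PowerSeries.X) ^ i * 1 ^ (k - i) * (k.choose i : PowerSeries ℚ)) =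
        if i = m then (-1 : ℚ) ^ m * (k.choose m : ℚ) else 0 := by
    intro i _
    rw [one_pow, mul_one, neg_pow, mul_comm ((-1 : PowerSeries ℚ) ^ i),
      show ((-1 : PowerSeries ℚ)) = PowerSeries.C (R := ℚ) (-1) from by simp, ← map_pow,
      ← map_natCast (PowerSeries.C (R := ℚ)) (k.choose i), mul_assoc, ← map_mul,
      PowerSeries.coeff_mul_C, PowerSeries.coeff_X_pow]
    by_cases hi : i = m
    · simp [hi, mul_comm]
    · simp [hi]
      intro h
      exact absurd h.symm hi
  rw [Finset.sum_congr rfl hterm, Finset.sum_ite_eq' (range (k + 1)) m]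
  by_cases hm : m ∈ range (k + 1)
  · simp [hm]
  · have : k.choose m = 0 := Nat.choose_eq_zero_of_lt (by simpa using hm)
    simp [hm, this]

lemma coeff_XoneX (k n : ℕ) (hk : k ≤ n) :
    PowerSeries.coeff n ((PowerSeries.X * (1 - PowerSeries.X)) ^ k) =
      (-1 : ℚ) ^ (n + k) * (k.choose (n - k) : ℚ) := by
  rw [mul_pow, show n = (n - k) + k by omega, PowerSeries.coeff_X_pow_mul,
    coeff_one_sub_X_pow, show (n - k) + k + k = (n - k) + 2 * k by omega,
    pow_add, pow_mul, neg_one_sq, one_pow, mul_one,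
    show (n - k) + k - k = n - k by omega]

noncomputable def uu (a : ℚ) (n : ℕ) : ℚ := ∑ i ∈ range (n + 1), cc a i * cc a (n - i)

noncomputable def vv (a : ℚ) (n : ℕ) : ℚ :=
  ∑ k ∈ range (n + 1), (-1 : ℚ) ^ (n + k) * (k.choose (n - k) : ℚ) * dd a k

lemma base0 (a : ℚ) : uu a 0 = vv a 0 := by
  simp [uu, vv, cc_zero, dd]

lemma base1 (a : ℚ) : uu a 1 = vv a 1 := by
  have h21 : (2 * 1).choose 1 = 2 := by decide
  simp [uu, vv, cc_zero, dd, Finset.sum_range_succ, h21]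
  ring

lemma base2 (a : ℚ) : uu a 2 = vv a 2 := by
  have h42 : (2 * 2).choose 2 = 6 := by decide
  have h21 : (2 * 1).choose 1 = 2 := by decide
  have e := cc_rec a 1
  push_cast at e
  simp [uu, vv, cc_zero, cc_one, dd, Finset.sum_range_succ, h21, h42] at *
  linear_combination -e


lemma urec (a : ℚ) (m : ℕ) :
    ((m : ℚ) + 3) ^ 3 * uu a (m + 3) =
      (2 * (m : ℚ) + 5) * (((m : ℚ) + 2) ^ 2 + ((m : ℚ) + 2) + 2 * (a * (1 - a))) * uu a (m + 2)
      - ((m : ℚ) + 2) * (((m : ℚ) + 2) ^ 2 - 1 + 4 * (a * (1 - a))) * uu a (m + 1) := by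
  set Gu : ℕ → ℚ := fun i =>
    (i : ℚ) * ((m : ℚ) + 3) * ((i : ℚ) - 2 * ((m : ℚ) + 3)) * cc a i * cc a (m + 3 - i)
    + (i : ℚ) * (2 * (a * (1 - a)) + 2 * ((m : ℚ) + 2) * ((m : ℚ) + 3) - (i : ℚ) * ((m : ℚ) + 3))
        * cc a i * cc a (m + 2 - i) with hGu
  have per : ∀ i ∈ range (m + 2),
      ((m : ℚ) + 3) ^ 3 * (cc a i * cc a (m + 3 - i))
      - (2 * (m : ℚ) + 5) * (((m : ℚ) + 2) ^ 2 + ((m : ℚ) + 2) + 2 * (a * (1 - a)))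
          * (cc a i * cc a (m + 2 - i))
      + ((m : ℚ) + 2) * (((m : ℚ) + 2) ^ 2 - 1 + 4 * (a * (1 - a))) * (cc a i * cc a (m + 1 - i))
      = Gu (i + 1) - Gu i := by
    intro i hi
    have hi' : i < m + 2 := mem_range.mp hi
    obtain ⟨k, hk⟩ : ∃ k, m + 2 = i + k + 1 := ⟨m + 1 - i, by omega⟩
    have e1 : m + 3 - i = k + 2 := by omega
    have e2 : m + 2 - i = k + 1 := by omega
    have e3 : m + 1 - i = k := by omega
    have e4 : m + 3 - (i + 1) = k + 1 := by omega
    have e5 : m + 2 - (i + 1) = k := by omega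
    have hm : (m : ℚ) = (i : ℚ) + (k : ℚ) - 1 := by
      have h := congrArg (fun t : ℕ => (t : ℚ)) hk
      push_cast at h
      linarith
    simp only [hGu, e1, e2, e3, e4, e5]
    have h1 := cc_rec a i
    have h2 := cc_rec a k
    have h3 := cc_rec a (k + 1)
    push_cast at h3
    rw [hm]
    push_cast
    linear_combination
      ((-2 - 3 * (k : ℚ) - (i : ℚ)) * cc a k + (4 + 3 * (k : ℚ) + (i : ℚ)) * cc a (k + 1)) * h1
      + ((-2 - (k : ℚ) - 3 * (i : ℚ)) * cc a i + (2 + 2 * (i : ℚ)) * cc a (i + 1)) * h2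
      + ((2 + (k : ℚ) + (i : ℚ)) * cc a i) * h3
  have tele := Finset.sum_range_sub Gu (m + 2)
  have hsum := Finset.sum_congr rfl per
  rw [tele] at hsum
  have hu3 : uu a (m + 3) =
      (∑ i ∈ range (m + 2), cc a i * cc a (m + 3 - i)) + cc a (m + 2) * cc a 1
        + cc a (m + 3) * cc a 0 := by
    rw [uu, Finset.sum_range_succ, Finset.sum_range_succ,
      show m + 3 - (m + 2) = 1 from by omega, show m + 3 - (m + 3) = 0 from by omega]
  have hu2 : uu a (m + 2) =
      (∑ i ∈ range (m + 2), cc a i * cc a (m + 2 - i)) + cc a (m + 2) * cc a 0 := by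
    rw [uu, Finset.sum_range_succ, show m + 2 - (m + 2) = 0 from by omega]
  have hu1 : uu a (m + 1) = ∑ i ∈ range (m + 2), cc a i * cc a (m + 1 - i) := by
    rw [uu]
  have hGum2 : Gu (m + 2) =
      ((m : ℚ) + 2) * ((m : ℚ) + 3) * (((m : ℚ) + 2) - 2 * ((m : ℚ) + 3))
          * cc a (m + 2) * cc a 1
      + ((m : ℚ) + 2) * (2 * (a * (1 - a)) + 2 * ((m : ℚ) + 2) * ((m : ℚ) + 3)
          - ((m : ℚ) + 2) * ((m : ℚ) + 3)) * cc a (m + 2) * cc a 0 := by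
    simp only [hGu, show m + 3 - (m + 2) = 1 from by omega,
      show m + 2 - (m + 2) = 0 from by omega]
    push_cast
    ring
  have hGu0 : Gu 0 = 0 := by simp [hGu]
  have hrec := cc_rec a (m + 2)
  rw [show m + 2 + 1 = m + 3 from by omega] at hrec
  push_cast at hrec
  have hsum2 : ∑ i ∈ range (m + 2),
      (((m : ℚ) + 3) ^ 3 * (cc a i * cc a (m + 3 - i))
      - (2 * (m : ℚ) + 5) * (((m : ℚ) + 2) ^ 2 + ((m : ℚ) + 2) + 2 * (a * (1 - a)))
          * (cc a i * cc a (m + 2 - i))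
      + ((m : ℚ) + 2) * (((m : ℚ) + 2) ^ 2 - 1 + 4 * (a * (1 - a))) * (cc a i * cc a (m + 1 - i)))
      = ((m : ℚ) + 3) ^ 3 * ∑ i ∈ range (m + 2), cc a i * cc a (m + 3 - i)
      - (2 * (m : ℚ) + 5) * (((m : ℚ) + 2) ^ 2 + ((m : ℚ) + 2) + 2 * (a * (1 - a)))
          * ∑ i ∈ range (m + 2), cc a i * cc a (m + 2 - i)
      + ((m : ℚ) + 2) * (((m : ℚ) + 2) ^ 2 - 1 + 4 * (a * (1 - a)))
          * ∑ i ∈ range (m + 2), cc a i * cc a (m + 1 - i) := by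
    rw [Finset.mul_sum, Finset.mul_sum, Finset.mul_sum, ← Finset.sum_sub_distrib,
      ← Finset.sum_add_distrib]
  rw [hsum2] at hsum
  rw [hu3, hu2, hu1, cc_zero, cc_one]
  rw [cc_zero, cc_one] at hGum2
  linear_combination hsum + hGum2 - hGu0 + ((m : ℚ) + 3) * hrec

lemma vrec (a : ℚ) (m : ℕ) :
    ((m : ℚ) + 3) ^ 3 * vv a (m + 3) =
      (2 * (m : ℚ) + 5) * (((m : ℚ) + 2) ^ 2 + ((m : ℚ) + 2) + 2 * (a * (1 - a))) * vv a (m + 2)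
      - ((m : ℚ) + 2) * (((m : ℚ) + 2) ^ 2 - 1 + 4 * (a * (1 - a))) * vv a (m + 1) := by
  set Gv : ℕ → ℚ := fun j =>
    (-1 : ℚ) ^ (m + 2 + j) *
      (-(4 * (-(a * (1 - a)) + ((j : ℚ) + 1) + 2 * ((j : ℚ) + 1) * (a * (1 - a))
          - 2 * ((j : ℚ) + 1) ^ 2 + ((m : ℚ) + 2) * ((j : ℚ) + 1) ^ 2))
          * (j.choose (m + 1 - j) : ℚ)
        + (2 * ((a * (1 - a)) - ((j : ℚ) + 1) - 2 * ((j : ℚ) + 1) * (a * (1 - a))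
          + ((j : ℚ) + 1) ^ 2 - 2 * ((m : ℚ) + 2) * ((j : ℚ) + 1) ^ 2))
          * (j.choose (m + 2 - j) : ℚ)) * dd a j with hGv
  have per : ∀ j ∈ range (m + 1),
      ((m : ℚ) + 3) ^ 3 *
        ((-1 : ℚ) ^ (m + 3 + (j + 1)) * ((j + 1).choose (m + 3 - (j + 1)) : ℚ) * dd a (j + 1))
      - (2 * (m : ℚ) + 5) * (((m : ℚ) + 2) ^ 2 + ((m : ℚ) + 2) + 2 * (a * (1 - a))) *
        ((-1 : ℚ) ^ (m + 2 + (j + 1)) * ((j + 1).choose (m + 2 - (j + 1)) : ℚ) * dd a (j + 1))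
      + ((m : ℚ) + 2) * (((m : ℚ) + 2) ^ 2 - 1 + 4 * (a * (1 - a))) *
        ((-1 : ℚ) ^ (m + 1 + (j + 1)) * ((j + 1).choose (m + 1 - (j + 1)) : ℚ) * dd a (j + 1))
      = Gv (j + 1) - Gv j := by
    intro j hj
    have hj' : j < m + 1 := mem_range.mp hj
    obtain ⟨l, hl⟩ : ∃ l, m = j + l := ⟨m - j, by omega⟩
    have e1 : m + 3 - (j + 1) = l + 2 := by omega
    have e2 : m + 2 - (j + 1) = l + 1 := by omega
    have e3 : m + 1 - (j + 1) = l := by omega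
    have e4 : m + 1 - j = l + 1 := by omega
    have e5 : m + 2 - j = l + 2 := by omega
    have s1 : m + 3 + (j + 1) = l + 2 * (j + 2) := by omega
    have s2 : m + 2 + (j + 1) = l + 1 + 2 * (j + 1) := by omega
    have s3 : m + 1 + (j + 1) = l + 2 * (j + 1) := by omega
    have s4 : m + 2 + j = l + 2 * (j + 1) := by omega
    have hm : (m : ℚ) = (j : ℚ) + (l : ℚ) := by
      have h := congrArg (fun t : ℕ => (t : ℚ)) hl
      push_cast at h
      linarith
    simp only [hGv, e1, e2, e3, e4, e5, s1, s2, s3, s4]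
    simp only [pow_add, pow_mul, neg_one_sq, one_pow, mul_one, pow_succ]
    rw [hm]
    push_cast
    have h1 := dd_rec a j
    have h2 : (((j + 1).choose (l + 1) : ℕ) : ℚ) = (j.choose l : ℚ) + (j.choose (l + 1) : ℚ) := by
      exact_mod_cast congrArg (Nat.cast : ℕ → ℚ) (Nat.choose_succ_succ j l)
    have h3n : (j + 1).choose (l + 2) = j.choose (l + 1) + j.choose (l + 2) := by
      exact Nat.choose_succ_succ j (l + 1)
    have h3 : (((j + 1).choose (l + 2) : ℕ) : ℚ) = (j.choose (l + 1) : ℚ) + (j.choose (l + 2) : ℚ) := by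
      exact_mod_cast congrArg (Nat.cast : ℕ → ℚ) h3n
    have h4 := RQ j l
    have h5 : ((l : ℚ) + 2) * (j.choose (l + 2) : ℚ) = ((j : ℚ) - (l : ℚ) - 1) * (j.choose (l + 1) : ℚ) := by
      have h5' := RQ j (l + 1)
      rw [show l + 1 + 1 = l + 2 from rfl] at h5'
      push_cast at h5'
      linarith
    have h6 := RQ (j + 1) l
    push_cast at h6
    linear_combination
      ((-1 : ℚ) ^ l * (2 * (j.choose l : ℚ) + 3 * (j.choose (l + 1) : ℚ)
          - 2 * ((j + 1).choose (l + 1) : ℚ) + ((j + 1).choose (l + 2) : ℚ))) * h1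
      + ((-1 : ℚ) ^ l * ((-4 * (a * (1 - a)) - 4 * (j : ℚ) - 8 * (j : ℚ) * (a * (1 - a))
          - 12 * (j : ℚ) ^ 2 - 8 * (j : ℚ) ^ 3) * dd a j
          + (2 + 12 * (l : ℚ) + 7 * (l : ℚ) ^ 2 + (l : ℚ) ^ 3 - 6 * (j : ℚ)
            + 3 * (j : ℚ) * (l : ℚ) + 2 * (j : ℚ) * (l : ℚ) ^ 2 - 4 * (j : ℚ) ^ 2
            - (j : ℚ) ^ 2 * (l : ℚ)) * dd a (j + 1))) * h2
      + ((-1 : ℚ) ^ l * ((2 * (a * (1 - a)) + 2 * (j : ℚ) + 4 * (j : ℚ) * (a * (1 - a))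
          + 6 * (j : ℚ) ^ 2 + 4 * (j : ℚ) ^ 3) * dd a j
          + (26 + 27 * (l : ℚ) + 9 * (l : ℚ) ^ 2 + (l : ℚ) ^ 3 + 24 * (j : ℚ)
            + 18 * (j : ℚ) * (l : ℚ) + 3 * (j : ℚ) * (l : ℚ) ^ 2 + 6 * (j : ℚ) ^ 2
            + 3 * (j : ℚ) ^ 2 * (l : ℚ)) * dd a (j + 1))) * h3
      + ((-1 : ℚ) ^ l * ((12 + 7 * (l : ℚ) + (l : ℚ) ^ 2 + 10 * (j : ℚ)
          + 3 * (j : ℚ) * (l : ℚ) + 2 * (j : ℚ) ^ 2) * dd a (j + 1))) * h4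
      + ((-1 : ℚ) ^ l * ((-4 - 8 * (j : ℚ) - 4 * (j : ℚ) ^ 2) * dd a j
          + (13 + 7 * (l : ℚ) + (l : ℚ) ^ 2 + 12 * (j : ℚ) + 3 * (j : ℚ) * (l : ℚ)
            + 3 * (j : ℚ) ^ 2) * dd a (j + 1))) * h5
      + ((-1 : ℚ) ^ l * ((2 + 4 * (a * (1 - a)) + 7 * (l : ℚ) + (l : ℚ) ^ 2 + 7 * (j : ℚ)
          + 4 * (j : ℚ) * (l : ℚ) + 3 * (j : ℚ) ^ 2) * dd a (j + 1))) * h6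
  have tele := Finset.sum_range_sub Gv (m + 1)
  have hsum := Finset.sum_congr rfl per
  rw [tele] at hsum
  have hv3 : vv a (m + 3) =
      (∑ j ∈ range (m + 1),
        (-1 : ℚ) ^ (m + 3 + (j + 1)) * ((j + 1).choose (m + 3 - (j + 1)) : ℚ) * dd a (j + 1))
      - ((m : ℚ) + 2) * dd a (m + 2) + dd a (m + 3) := by
    rw [vv, Finset.sum_range_succ, Finset.sum_range_succ, Finset.sum_range_succ',
      show m + 3 - (m + 3) = 0 from by omega, show m + 3 + (m + 3) = 2 * (m + 3) from by omega,
      show m + 3 - (m + 2) = 1 from by omega, show m + 3 + (m + 2) = 2 * (m + 2) + 1 from by omega,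
      show (0 : ℕ).choose (m + 3 - 0) = 0 from Nat.choose_eq_zero_of_lt (by omega)]
    simp only [pow_succ, pow_mul, neg_one_sq, one_pow, one_mul, Nat.choose_zero_right,
      Nat.choose_one_right, Nat.cast_zero, Nat.cast_one, Nat.cast_add, Nat.cast_ofNat]
    push_cast
    ring
  have hv2 : vv a (m + 2) =
      (∑ j ∈ range (m + 1),
        (-1 : ℚ) ^ (m + 2 + (j + 1)) * ((j + 1).choose (m + 2 - (j + 1)) : ℚ) * dd a (j + 1))
      + dd a (m + 2) := by
    rw [vv, Finset.sum_range_succ, Finset.sum_range_succ',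
      show m + 2 - (m + 2) = 0 from by omega, show m + 2 + (m + 2) = 2 * (m + 2) from by omega,
      show (0 : ℕ).choose (m + 2 - 0) = 0 from Nat.choose_eq_zero_of_lt (by omega)]
    simp only [pow_mul, neg_one_sq, one_pow, one_mul, Nat.choose_zero_right,
      Nat.cast_zero, Nat.cast_one]
    push_cast
    ring
  have hv1 : vv a (m + 1) =
      ∑ j ∈ range (m + 1),
        (-1 : ℚ) ^ (m + 1 + (j + 1)) * ((j + 1).choose (m + 1 - (j + 1)) : ℚ) * dd a (j + 1) := by
    rw [vv, Finset.sum_range_succ',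
      show (0 : ℕ).choose (m + 1 - 0) = 0 from Nat.choose_eq_zero_of_lt (by omega)]
    push_cast
    ring
  have hsum2 : ∑ j ∈ range (m + 1),
      (((m : ℚ) + 3) ^ 3 *
        ((-1 : ℚ) ^ (m + 3 + (j + 1)) * ((j + 1).choose (m + 3 - (j + 1)) : ℚ) * dd a (j + 1))
      - (2 * (m : ℚ) + 5) * (((m : ℚ) + 2) ^ 2 + ((m : ℚ) + 2) + 2 * (a * (1 - a))) *
        ((-1 : ℚ) ^ (m + 2 + (j + 1)) * ((j + 1).choose (m + 2 - (j + 1)) : ℚ) * dd a (j + 1))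
      + ((m : ℚ) + 2) * (((m : ℚ) + 2) ^ 2 - 1 + 4 * (a * (1 - a))) *
        ((-1 : ℚ) ^ (m + 1 + (j + 1)) * ((j + 1).choose (m + 1 - (j + 1)) : ℚ) * dd a (j + 1)))
      = ((m : ℚ) + 3) ^ 3 * ∑ j ∈ range (m + 1),
          (-1 : ℚ) ^ (m + 3 + (j + 1)) * ((j + 1).choose (m + 3 - (j + 1)) : ℚ) * dd a (j + 1)
      - (2 * (m : ℚ) + 5) * (((m : ℚ) + 2) ^ 2 + ((m : ℚ) + 2) + 2 * (a * (1 - a))) *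
          ∑ j ∈ range (m + 1),
          (-1 : ℚ) ^ (m + 2 + (j + 1)) * ((j + 1).choose (m + 2 - (j + 1)) : ℚ) * dd a (j + 1)
      + ((m : ℚ) + 2) * (((m : ℚ) + 2) ^ 2 - 1 + 4 * (a * (1 - a))) *
          ∑ j ∈ range (m + 1),
          (-1 : ℚ) ^ (m + 1 + (j + 1)) * ((j + 1).choose (m + 1 - (j + 1)) : ℚ) * dd a (j + 1) := by
    rw [Finset.mul_sum, Finset.mul_sum, Finset.mul_sum, ← Finset.sum_sub_distrib,
      ← Finset.sum_add_distrib]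
  rw [hsum2] at hsum
  have hGvm1 : Gv (m + 1) =
      (4 * (-(a * (1 - a)) + ((m : ℚ) + 2) + 2 * ((m : ℚ) + 2) * (a * (1 - a))
          - 2 * ((m : ℚ) + 2) ^ 2 + ((m : ℚ) + 2) * ((m : ℚ) + 2) ^ 2)
        - 2 * ((a * (1 - a)) - ((m : ℚ) + 2) - 2 * ((m : ℚ) + 2) * (a * (1 - a))
          + ((m : ℚ) + 2) ^ 2 - 2 * ((m : ℚ) + 2) * ((m : ℚ) + 2) ^ 2) * ((m : ℚ) + 1))
        * dd a (m + 1) := by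
    simp only [hGv, show m + 1 - (m + 1) = 0 from by omega,
      show m + 2 - (m + 1) = 1 from by omega,
      show m + 2 + (m + 1) = 2 * (m + 1) + 1 from by omega]
    simp only [pow_succ, pow_mul, neg_one_sq, one_pow, one_mul, Nat.choose_zero_right,
      Nat.choose_one_right, Nat.cast_zero, Nat.cast_one]
    push_cast
    ring
  have hGv0 : Gv 0 = 0 := by
    simp only [hGv]
    rw [show m + 1 - 0 = m + 1 from by omega, show m + 2 - 0 = m + 2 from by omega,
      show (0 : ℕ).choose (m + 1) = 0 from Nat.choose_eq_zero_of_lt (by omega),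
      show (0 : ℕ).choose (m + 2) = 0 from Nat.choose_eq_zero_of_lt (by omega)]
    push_cast
    ring
  have hd1 := dd_rec a (m + 1)
  rw [show m + 1 + 1 = m + 2 from by omega] at hd1
  push_cast at hd1
  have hd2 := dd_rec a (m + 2)
  rw [show m + 2 + 1 = m + 3 from by omega] at hd2
  push_cast at hd2
  rw [hv3, hv2, hv1]
  linear_combination hsum + hGvm1 - hGv0 + hd2 - ((m : ℚ) + 3) * hd1

lemma main_eq (a : ℚ) : ∀ n : ℕ, uu a n = vv a n := by
  intro n
  induction n using Nat.strong_induction_on with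
  | _ n ih =>
    match n with
    | 0 => exact base0 a
    | 1 => exact base1 a
    | 2 => exact base2 a
    | (m + 3) =>
      have hu := urec a m
      have hv := vrec a m
      have h2 : uu a (m + 2) = vv a (m + 2) := ih (m + 2) (by omega)
      have h1 : uu a (m + 1) = vv a (m + 1) := ih (m + 1) (by omega)
      have hne : ((m : ℚ) + 3) ^ 3 ≠ 0 := by positivity
      apply mul_left_cancel₀ hne
      rw [hu, hv, h1, h2]

end ClausenGaussAux

theorem clausen_gauss_series (a : ℚ) (n : ℕ) :
    PowerSeries.coeff n
        ((PowerSeries.mk fun k =>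
          Polynomial.eval a (ascPochhammer ℚ k) *
            Polynomial.eval (1 - a) (ascPochhammer ℚ k) / (k.factorial : ℚ) ^ 2) ^ 2) =
      ∑ k ∈ Finset.range (n + 1),
        Polynomial.eval a (ascPochhammer ℚ k) *
            Polynomial.eval (1 - a) (ascPochhammer ℚ k) / (k.factorial : ℚ) ^ 2 *
          ((2 * k).choose k) *
          PowerSeries.coeff n ((PowerSeries.X * (1 - PowerSeries.X)) ^ k) := by
  classical
  open ClausenGaussAux in
  have h1 : PowerSeries.coeff n
      ((PowerSeries.mk fun k =>
        Polynomial.eval a (ascPochhammer ℚ k) *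
          Polynomial.eval (1 - a) (ascPochhammer ℚ k) / (k.factorial : ℚ) ^ 2) ^ 2) =
      ClausenGaussAux.uu a n := by
    rw [sq, PowerSeries.coeff_mul, Finset.Nat.sum_antidiagonal_eq_sum_range_succ_mk,
      ClausenGaussAux.uu]
    refine Finset.sum_congr rfl fun i _ => ?_
    simp [ClausenGaussAux.cc]
  have h2 : (∑ k ∈ Finset.range (n + 1),
      Polynomial.eval a (ascPochhammer ℚ k) *
          Polynomial.eval (1 - a) (ascPochhammer ℚ k) / (k.factorial : ℚ) ^ 2 *
        ((2 * k).choose k) *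
        PowerSeries.coeff n ((PowerSeries.X * (1 - PowerSeries.X)) ^ k)) =
      ClausenGaussAux.vv a n := by
    rw [ClausenGaussAux.vv]
    refine Finset.sum_congr rfl fun k hk => ?_
    rw [ClausenGaussAux.coeff_XoneX k n (Nat.lt_succ_iff.mp (Finset.mem_range.mp hk))]
    simp only [ClausenGaussAux.dd, ClausenGaussAux.cc]
    ring
  rw [h1, h2]
  exact ClausenGaussAux.main_eq a n
end
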